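/- arXiv:1412.0379 — 7 statements merged into one kernel-verified Lean document; each statement's English description precedes it below -/
import Mathlib

section
/- Let h: ℝ^m → ℝ be a bounded measurable kernel and θ = E[h(Y₁,...,Y_m)] for independent copies Y₁,...,Y_m of X₁. Define g₁(x) = E[h(x, Y₂,...,Y_m)] - θ. If h satisfies the variation condition with constant L, then g₁ also satisfies the variation condition with the same constant L, i.e., E[sup_{|x - X₁'| ≤ ε} |g₁(x) - g₁(X₁')|] ≤ Lε for all sufficiently small ε > 0. -/
open MeasureTheory ProbabilityTheory Set Metric Filter

/-- The supremum of `|h x - h p|` over the closed `ε`-ball around `p`. -/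
noncomputable def varSup {m : ℕ} (h : EuclideanSpace ℝ (Fin m) → ℝ) (ε : ℝ)
    (p : EuclideanSpace ℝ (Fin m)) : ℝ :=
  ⨆ x : {x : EuclideanSpace ℝ (Fin m) // dist x p ≤ ε}, |h x.1 - h p|

namespace VarAux

variable {n : ℕ} {h : EuclideanSpace ℝ (Fin n) → ℝ} {B r r' ε : ℝ}
  {p : EuclideanSpace ℝ (Fin n)}

noncomputable def fUp (h : EuclideanSpace ℝ (Fin n) → ℝ) (r : ℝ)
    (p : EuclideanSpace ℝ (Fin n)) : ℝ := sSup (h '' Metric.ball p r)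

noncomputable def fLo (h : EuclideanSpace ℝ (Fin n) → ℝ) (r : ℝ)
    (p : EuclideanSpace ℝ (Fin n)) : ℝ := sInf (h '' Metric.ball p r)

noncomputable def FF (h : EuclideanSpace ℝ (Fin n) → ℝ) (r : ℝ)
    (p : EuclideanSpace ℝ (Fin n)) : ℝ := max (fUp h r p - h p) (h p - fLo h r p)

lemma bddAbove_image (hbdd : ∀ x, |h x| ≤ B) (s : Set (EuclideanSpace ℝ (Fin n))) :
    BddAbove (h '' s) := by
  refine ⟨B, ?_⟩; rintro y ⟨x, -, rfl⟩; exact (abs_le.1 (hbdd x)).2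

lemma bddBelow_image (hbdd : ∀ x, |h x| ≤ B) (s : Set (EuclideanSpace ℝ (Fin n))) :
    BddBelow (h '' s) := by
  refine ⟨-B, ?_⟩; rintro y ⟨x, -, rfl⟩; exact (abs_le.1 (hbdd x)).1

lemma image_nonempty (hr : 0 < r) : (h '' Metric.ball p r).Nonempty :=
  (Metric.nonempty_ball.2 hr).image h

lemma FF_nonneg (hbdd : ∀ x, |h x| ≤ B) (hr : 0 < r) : 0 ≤ FF h r p :=
  le_max_of_le_left (sub_nonneg.2 (le_csSup (bddAbove_image hbdd _)
    (mem_image_of_mem h (mem_ball_self hr))))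

lemma fUp_le (hbdd : ∀ x, |h x| ≤ B) (hr : 0 < r) : fUp h r p ≤ B :=
  csSup_le (image_nonempty hr) (by rintro y ⟨x, -, rfl⟩; exact (abs_le.1 (hbdd x)).2)

lemma le_fLo (hbdd : ∀ x, |h x| ≤ B) (hr : 0 < r) : -B ≤ fLo h r p :=
  le_csInf (image_nonempty hr) (by rintro y ⟨x, -, rfl⟩; exact (abs_le.1 (hbdd x)).1)

lemma FF_le (hbdd : ∀ x, |h x| ≤ B) (hr : 0 < r) : FF h r p ≤ 2 * B := by
  have h1 := fUp_le (p := p) hbdd hr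
  have h2 := le_fLo (p := p) hbdd hr
  have h3 := abs_le.1 (hbdd p)
  refine max_le (by linarith [h3.1]) (by linarith [h3.2])

lemma abs_FF_le (hbdd : ∀ x, |h x| ≤ B) (hr : 0 < r) : |FF h r p| ≤ 2 * B := by
  rw [abs_of_nonneg (FF_nonneg hbdd hr)]; exact FF_le hbdd hr

lemma FF_mono (hbdd : ∀ x, |h x| ≤ B) (hr : 0 < r) (hrr : r ≤ r') :
    FF h r p ≤ FF h r' p := by
  have h1 : fUp h r p ≤ fUp h r' p :=
    csSup_le_csSup (bddAbove_image hbdd _) (image_nonempty hr)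
      (image_mono (f := h) (ball_subset_ball hrr))
  have h2 : fLo h r' p ≤ fLo h r p :=
    csInf_le_csInf (bddBelow_image hbdd _) (image_nonempty hr)
      (image_mono (f := h) (ball_subset_ball hrr))
  exact max_le_max (by linarith) (by linarith)

lemma abs_le_FF (hbdd : ∀ x, |h x| ≤ B) {q : EuclideanSpace ℝ (Fin n)}
    (hq : dist q p < r) : |h q - h p| ≤ FF h r p := by
  have hmem : q ∈ Metric.ball p r := mem_ball.2 hq
  refine abs_sub_le_iff.2 ⟨?_, ?_⟩
  · exact le_max_of_le_left (sub_le_sub_right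
      (le_csSup (bddAbove_image hbdd _) (mem_image_of_mem h hmem)) _)
  · exact le_max_of_le_right (sub_le_sub_left
      (csInf_le (bddBelow_image hbdd _) (mem_image_of_mem h hmem)) _)

lemma bddAbove_varSup_range (hbdd : ∀ x, |h x| ≤ B) :
    BddAbove (Set.range fun x : {x : EuclideanSpace ℝ (Fin n) // dist x p ≤ ε} =>
      |h x.1 - h p|) := by
  refine ⟨2 * B, ?_⟩; rintro y ⟨x, rfl⟩
  calc |h x.1 - h p| ≤ |h x.1| + |h p| := abs_sub _ _
    _ ≤ 2 * B := by linarith [hbdd x.1, hbdd p]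

lemma varSup_nonneg (hbdd : ∀ x, |h x| ≤ B) (hε : 0 ≤ ε) : 0 ≤ varSup h ε p := by
  have := le_ciSup (bddAbove_varSup_range (p := p) (ε := ε) hbdd)
    ⟨p, by simp [dist_self, hε]⟩
  unfold varSup; simpa using this

lemma varSup_le (hbdd : ∀ x, |h x| ≤ B) (hε : 0 ≤ ε) : varSup h ε p ≤ 2 * B := by
  haveI : Nonempty {x : EuclideanSpace ℝ (Fin n) // dist x p ≤ ε} :=
    ⟨⟨p, by simp [dist_self, hε]⟩⟩
  refine ciSup_le fun x => ?_
  calc |h x.1 - h p| ≤ |h x.1| + |h p| := abs_sub _ _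
    _ ≤ 2 * B := by linarith [hbdd x.1, hbdd p]

lemma abs_varSup_le (hbdd : ∀ x, |h x| ≤ B) (hε : 0 ≤ ε) : |varSup h ε p| ≤ 2 * B := by
  rw [abs_of_nonneg (varSup_nonneg hbdd hε)]; exact varSup_le hbdd hε

lemma FF_le_varSup (hbdd : ∀ x, |h x| ≤ B) (hr : 0 < r) (hrε : r ≤ ε) :
    FF h r p ≤ varSup h ε p := by
  refine max_le ?_ ?_
  · rw [sub_le_iff_le_add]
    refine csSup_le (image_nonempty hr) ?_
    rintro y ⟨x, hx, rfl⟩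
    have h1 : |h x - h p| ≤ varSup h ε p :=
      le_ciSup (bddAbove_varSup_range hbdd) ⟨x, le_trans (mem_ball.1 hx).le hrε⟩
    have := abs_sub_le_iff.1 h1
    linarith [this.1]
  · rw [sub_le_iff_le_add, ← sub_le_iff_le_add']
    refine le_csInf (image_nonempty hr) ?_
    rintro y ⟨x, hx, rfl⟩
    have h1 : |h x - h p| ≤ varSup h ε p :=
      le_ciSup (bddAbove_varSup_range hbdd) ⟨x, le_trans (mem_ball.1 hx).le hrε⟩
    have := abs_sub_le_iff.1 h1
    linarith [this.2]

lemma varSup_le_FF (hbdd : ∀ x, |h x| ≤ B) (hε : 0 ≤ ε) (hlt : ε < r) :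
    varSup h ε p ≤ FF h r p := by
  haveI : Nonempty {x : EuclideanSpace ℝ (Fin n) // dist x p ≤ ε} :=
    ⟨⟨p, by simp [dist_self, hε]⟩⟩
  exact ciSup_le fun x => abs_le_FF hbdd (lt_of_le_of_lt x.2 hlt)

lemma measurable_fUp (hmeas : Measurable h) (hbdd : ∀ x, |h x| ≤ B) (hr : 0 < r) :
    Measurable (fUp h r) := by
  refine measurable_of_Ioi fun t => ?_
  have hset : fUp h r ⁻¹' Ioi t = ⋃ x ∈ {x | t < h x}, Metric.ball x r := by
    ext p
    simp only [mem_preimage, mem_Ioi, mem_iUnion, mem_setOf_eq, exists_prop]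
    constructor
    · intro ht
      obtain ⟨y, ⟨x, hx, rfl⟩, hy⟩ := exists_lt_of_lt_csSup (image_nonempty hr) ht
      exact ⟨x, hy, by rwa [mem_ball, dist_comm, ← mem_ball]⟩
    · rintro ⟨x, htx, hpx⟩
      refine lt_of_lt_of_le htx (le_csSup (bddAbove_image hbdd _)
        (mem_image_of_mem h ?_))
      rwa [mem_ball, dist_comm, ← mem_ball]
  rw [hset]
  exact (isOpen_biUnion fun x _ => isOpen_ball).measurableSet

lemma measurable_fLo (hmeas : Measurable h) (hbdd : ∀ x, |h x| ≤ B) (hr : 0 < r) :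
    Measurable (fLo h r) := by
  refine measurable_of_Iio fun t => ?_
  have hset : fLo h r ⁻¹' Iio t = ⋃ x ∈ {x | h x < t}, Metric.ball x r := by
    ext p
    simp only [mem_preimage, mem_Iio, mem_iUnion, mem_setOf_eq, exists_prop]
    constructor
    · intro ht
      obtain ⟨y, ⟨x, hx, rfl⟩, hy⟩ := exists_lt_of_csInf_lt (image_nonempty hr) ht
      exact ⟨x, hy, by rwa [mem_ball, dist_comm, ← mem_ball]⟩
    · rintro ⟨x, htx, hpx⟩
      refine lt_of_le_of_lt (csInf_le (bddBelow_image hbdd _)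
        (mem_image_of_mem h ?_)) htx
      rwa [mem_ball, dist_comm, ← mem_ball]
  rw [hset]
  exact (isOpen_biUnion fun x _ => isOpen_ball).measurableSet

lemma measurable_FF (hmeas : Measurable h) (hbdd : ∀ x, |h x| ≤ B) (hr : 0 < r) :
    Measurable (FF h r) :=
  ((measurable_fUp hmeas hbdd hr).sub hmeas).max
    (hmeas.sub (measurable_fLo hmeas hbdd hr))

lemma dist_cons (m : ℕ) (x y : ℝ) (v : Fin m → ℝ) :
    @dist (EuclideanSpace ℝ (Fin (m + 1))) _ (WithLp.toLp 2 (Fin.cons x v : Fin (m + 1) → ℝ))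
      (WithLp.toLp 2 (Fin.cons y v : Fin (m + 1) → ℝ)) = |x - y| := by
  rw [EuclideanSpace.dist_eq]
  simp [Fin.sum_univ_succ, Real.dist_eq, Real.sqrt_sq_eq_abs]

lemma integrable_of_bound {α : Type*} [MeasurableSpace α] (ρ : Measure α)
    [IsFiniteMeasure ρ] (f : α → ℝ) (C : ℝ) (hf : AEStronglyMeasurable f ρ)
    (hC : ∀ a, |f a| ≤ C) : Integrable f ρ :=
  Integrable.mono' (integrable_const C) hf
    (Filter.Eventually.of_forall fun a => by simpa [Real.norm_eq_abs] using hC a)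

end VarAux
def consE (m : ℕ) (q : ℝ × (Fin m → ℝ)) : EuclideanSpace ℝ (Fin (m + 1)) :=
  WithLp.toLp 2 (Fin.cons q.1 q.2 : Fin (m + 1) → ℝ)

/-- If a bounded measurable kernel `h` satisfies the variation condition with constant `L`,
then its first Hoeffding projection `g₁` does as well, with the same constant. -/
theorem stmt1 {m : ℕ} {Ω : Type*} [MeasurableSpace Ω] (μ : Measure Ω) [IsProbabilityMeasure μ]
    (h : EuclideanSpace ℝ (Fin (m + 1)) → ℝ) (B : ℝ)
    (hbdd : ∀ x, |h x| ≤ B) (hmeas : Measurable h)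
    -- `Y 0, Y 1, ..., Y m` are independent copies of `X₁`
    (Y : Fin (m + 1) → Ω → ℝ) (hYmeas : ∀ i, Measurable (Y i))
    (hYid : ∀ i, μ.map (Y i) = μ.map (Y 0))
    (hYind : iIndepFun Y μ)
    (L ε₀ : ℝ) (hε₀ : 0 < ε₀)
    -- `h` satisfies the variation condition with constant `L`
    (hvar : ∀ ε : ℝ, 0 < ε → ε < ε₀ →
      ∫ ω, varSup h ε (WithLp.toLp 2 (fun i => Y i ω)) ∂μ ≤ L * ε)
    -- `θ` and the first Hoeffding projection `g₁`
    (θ : ℝ) (hθ : θ = ∫ ω, h (WithLp.toLp 2 (fun i => Y i ω)) ∂μ)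
    (g₁ : ℝ → ℝ)
    (hg₁ : ∀ x : ℝ, g₁ x = (∫ ω, h (WithLp.toLp 2 (Fin.cons x (fun j => Y j.succ ω) : Fin (m + 1) → ℝ)) ∂μ) - θ) :
    ∀ ε : ℝ, 0 < ε → ε < ε₀ →
      ∫ ω, (⨆ x : {x : ℝ // |x - Y 0 ω| ≤ ε}, |g₁ x.1 - g₁ (Y 0 ω)|) ∂μ ≤ L * ε := by
  classical
  intro ε hε hεε₀
  have hB : 0 ≤ B := le_trans (abs_nonneg _) (hbdd 0)
  have hYvmeas : Measurable (fun ω => (WithLp.toLp 2 (fun i => Y i ω) : EuclideanSpace ℝ (Fin (m + 1)))) :=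
    (WithLp.measurable_toLp 2 _).comp (measurable_pi_lambda _ fun i => hYmeas i)
  have hYsmeas : Measurable (fun ω => (fun j => Y j.succ ω : Fin m → ℝ)) :=
    measurable_pi_lambda _ fun j => hYmeas j.succ
  have hL0 : 0 ≤ L := by
    have h1 := hvar (ε₀ / 2) (by linarith) (by linarith)
    have h2 : 0 ≤ ∫ ω, varSup h (ε₀ / 2) (WithLp.toLp 2 (fun i => Y i ω)) ∂μ :=
      integral_nonneg fun ω => VarAux.varSup_nonneg hbdd (by linarith)
    nlinarith
  -- bound on g₁
  have habsint : ∀ (f : Ω → ℝ) (C : ℝ), (∀ a, |f a| ≤ C) → |∫ a, f a ∂μ| ≤ C := by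
    intro f C hC
    have := norm_integral_le_of_norm_le_const (μ := μ) (f := f) (C := C)
      (Filter.Eventually.of_forall fun a => by simpa [Real.norm_eq_abs] using hC a)
    simpa [Real.norm_eq_abs, measure_univ] using this
  have hg₁bdd : ∀ x : ℝ, |g₁ x| ≤ B + |θ| := by
    intro x
    rw [hg₁ x]
    have h1 : |∫ ω, h (WithLp.toLp 2 (Fin.cons x (fun j => Y j.succ ω) : Fin (m + 1) → ℝ)) ∂μ| ≤ B :=
      habsint _ _ fun a => hbdd _
    calc |(∫ ω, h (WithLp.toLp 2 (Fin.cons x (fun j => Y j.succ ω) : Fin (m + 1) → ℝ)) ∂μ) - θ|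
        ≤ |∫ ω, h (WithLp.toLp 2 (Fin.cons x (fun j => Y j.succ ω) : Fin (m + 1) → ℝ)) ∂μ| + |θ| := abs_sub _ _
      _ ≤ B + |θ| := by linarith
  have hbddg : ∀ y : ℝ, BddAbove (Set.range fun x : {x : ℝ // |x - y| ≤ ε} =>
      |g₁ x.1 - g₁ y|) := by
    intro y
    refine ⟨2 * (B + |θ|), ?_⟩
    rintro z ⟨x, rfl⟩
    calc |g₁ x.1 - g₁ y| ≤ |g₁ x.1| + |g₁ y| := abs_sub _ _
      _ ≤ 2 * (B + |θ|) := by linarith [hg₁bdd x.1, hg₁bdd y]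
  -- integrability of cons-sections
  have hIx : ∀ y : ℝ, Integrable (fun ω' => h (WithLp.toLp 2 (Fin.cons y (fun j => Y j.succ ω') : Fin (m + 1) → ℝ))) μ := by
    intro y
    refine VarAux.integrable_of_bound μ _ B ?_ fun ω' => hbdd _
    refine (hmeas.comp ((WithLp.measurable_toLp 2 _).comp ?_)).aestronglyMeasurable
    apply measurable_pi_lambda
    intro i
    refine Fin.cases ?_ (fun j => ?_) i
    · simp only [Fin.cons_zero]; exact measurable_const
    · simp only [Fin.cons_succ]; exact hYmeas j.succ
  -- the key claim, for every b ∈ (ε, ε₀)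
  have key : ∀ b : ℝ, ε < b → b < ε₀ →
      (∫ ω, (⨆ x : {x : ℝ // |x - Y 0 ω| ≤ ε}, |g₁ x.1 - g₁ (Y 0 ω)|) ∂μ) ≤ L * b := by
    intro b hεb hbε₀
    have hεa : ε < (ε + b) / 2 := by linarith
    have hab : (ε + b) / 2 < b := by linarith
    set a : ℝ := (ε + b) / 2 with ha_def
    have ha0 : 0 < a := lt_trans hε hεa
    have hFFmeas : ∀ r : ℝ, 0 < r →
        Measurable (fun ω => VarAux.FF h r (WithLp.toLp 2 (fun i => Y i ω))) := fun r hr =>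
      (VarAux.measurable_FF hmeas hbdd hr).comp hYvmeas
    have hFFint : ∀ r : ℝ, 0 < r →
        Integrable (fun ω => VarAux.FF h r (WithLp.toLp 2 (fun i => Y i ω))) μ := fun r hr =>
      VarAux.integrable_of_bound μ _ (2 * B) (hFFmeas r hr).aestronglyMeasurable
        fun ω => VarAux.abs_FF_le hbdd hr
    set G : ℝ → ℝ := fun t => ∫ ω, VarAux.FF h (min (max t a) b) (WithLp.toLp 2 (fun i => Y i ω)) ∂μ
      with hG_def
    have hclamp_pos : ∀ t : ℝ, 0 < min (max t a) b := fun t =>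
      lt_of_lt_of_le ha0 (le_min (le_max_right _ _) hab.le)
    have hGmono : Monotone G := by
      intro s t hst
      exact integral_mono (hFFint _ (hclamp_pos s)) (hFFint _ (hclamp_pos t))
        fun ω => VarAux.FF_mono hbdd (hclamp_pos s)
          (min_le_min (max_le_max hst le_rfl) le_rfl)
    obtain ⟨r₀, hr₀mem, hr₀cont⟩ : ∃ r₀ ∈ Ioo a b, ContinuousAt G r₀ := by
      by_contra hcon
      push_neg at hcon
      have hsub : Ioo a b ⊆ {x | ¬ContinuousAt G x} := fun x hx => hcon x hx
      have hc : (Ioo a b).Countable := hGmono.countable_not_continuousAt.mono hsub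
      have hle := hc.le_aleph0
      rw [Cardinal.mk_Ioo_real hab] at hle
      exact absurd hle Cardinal.aleph0_lt_continuum.not_ge
    obtain ⟨har₀, hr₀b⟩ := hr₀mem
    have hr₀pos : 0 < r₀ := lt_trans ha0 har₀
    -- approximating radii
    set d : ℝ := min (r₀ - a) (b - r₀) with hd_def
    have hd0 : 0 < d := lt_min (by linarith) (by linarith)
    have hdra : d ≤ r₀ - a := min_le_left _ _
    have hdbr : d ≤ b - r₀ := min_le_right _ _
    set l : ℕ → ℝ := fun k => r₀ - d * (1 / ((k : ℝ) + 1)) with hl_def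
    set u : ℕ → ℝ := fun k => r₀ + d * (1 / ((k : ℝ) + 1)) with hu_def
    have hkpos : ∀ k : ℕ, 0 < 1 / ((k : ℝ) + 1) := fun k => by positivity
    have hkle : ∀ k : ℕ, 1 / ((k : ℝ) + 1) ≤ 1 := fun k => by
      rw [div_le_one (by positivity)]
      linarith [Nat.cast_nonneg' (α := ℝ) k, (by positivity : (0:ℝ) ≤ (k:ℝ))]
    have hdk : ∀ k : ℕ, 0 < d * (1 / ((k : ℝ) + 1)) ∧ d * (1 / ((k : ℝ) + 1)) ≤ d :=
      fun k => ⟨by positivity, by nlinarith [hkle k, hkpos k]⟩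
    have hal : ∀ k, a ≤ l k := fun k => by
      have := (hdk k).2; simp only [hl_def]; linarith
    have hlr₀ : ∀ k, l k ≤ r₀ := fun k => by
      have := (hdk k).1; simp only [hl_def]; linarith
    have hlpos : ∀ k, 0 < l k := fun k => lt_of_lt_of_le ha0 (hal k)
    have hub : ∀ k, u k ≤ b := fun k => by
      have := (hdk k).2; simp only [hu_def]; linarith
    have hr₀u : ∀ k, r₀ < u k := fun k => by
      have := (hdk k).1; simp only [hu_def]; linarith
    have hau : ∀ k, a ≤ u k := fun k => le_trans har₀.le (hr₀u k).le
    have hlb : ∀ k, l k ≤ b := fun k => le_trans (hlr₀ k) hr₀b.le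
    -- sandwich functions
    set φ : Ω → ℝ := fun ω => ⨆ k : ℕ, VarAux.FF h (l k) (WithLp.toLp 2 (fun i => Y i ω)) with hφ_def
    set φ' : Ω → ℝ := fun ω => ⨅ k : ℕ, VarAux.FF h (u k) (WithLp.toLp 2 (fun i => Y i ω)) with hφ'_def
    have hφmeas : Measurable φ := Measurable.iSup fun k => hFFmeas (l k) (hlpos k)
    have hφ'meas : Measurable φ' := Measurable.iInf fun k => hFFmeas (u k)
      (lt_trans hr₀pos (hr₀u k))
    have hbddφ : ∀ ω, BddAbove (Set.range fun k : ℕ =>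
        VarAux.FF h (l k) (WithLp.toLp 2 (fun i => Y i ω))) := by
      intro ω
      refine ⟨2 * B, ?_⟩
      rintro z ⟨k, rfl⟩
      exact VarAux.FF_le hbdd (hlpos k)
    have hbddφ' : ∀ ω, BddBelow (Set.range fun k : ℕ =>
        VarAux.FF h (u k) (WithLp.toLp 2 (fun i => Y i ω))) := by
      intro ω
      refine ⟨0, ?_⟩
      rintro z ⟨k, rfl⟩
      exact VarAux.FF_nonneg hbdd (lt_trans hr₀pos (hr₀u k))
    have hsand1 : ∀ ω, φ ω ≤ varSup h r₀ (WithLp.toLp 2 (fun i => Y i ω)) := fun ω =>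
      ciSup_le fun k => VarAux.FF_le_varSup hbdd (hlpos k) (hlr₀ k)
    have hsand2 : ∀ ω, varSup h r₀ (WithLp.toLp 2 (fun i => Y i ω)) ≤ φ' ω := fun ω =>
      le_ciInf fun k => VarAux.varSup_le_FF hbdd hr₀pos.le (hr₀u k)
    have hφnonneg : ∀ ω, 0 ≤ φ ω := fun ω =>
      le_trans (VarAux.FF_nonneg hbdd (hlpos 0)) (le_ciSup (hbddφ ω) 0)
    have hφle2B : ∀ ω, φ ω ≤ 2 * B := fun ω =>
      ciSup_le fun k => VarAux.FF_le hbdd (hlpos k)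
    have hφ'nonneg : ∀ ω, 0 ≤ φ' ω := fun ω =>
      le_ciInf fun k => VarAux.FF_nonneg hbdd (lt_trans hr₀pos (hr₀u k))
    have hφ'le2B : ∀ ω, φ' ω ≤ 2 * B := fun ω =>
      le_trans (ciInf_le (hbddφ' ω) 0) (VarAux.FF_le hbdd (lt_trans hr₀pos (hr₀u 0)))
    have hφint : Integrable φ μ :=
      VarAux.integrable_of_bound μ _ (2 * B) hφmeas.aestronglyMeasurable fun ω => by
        rw [abs_of_nonneg (hφnonneg ω)]; exact hφle2B ω
    have hφ'int : Integrable φ' μ :=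
      VarAux.integrable_of_bound μ _ (2 * B) hφ'meas.aestronglyMeasurable fun ω => by
        rw [abs_of_nonneg (hφ'nonneg ω)]; exact hφ'le2B ω
    -- the gap tends to zero
    have hGl : ∀ k, G (l k) = ∫ ω, VarAux.FF h (l k) (WithLp.toLp 2 (fun i => Y i ω)) ∂μ := by
      intro k
      have : min (max (l k) a) b = l k := by
        rw [max_eq_left (hal k), min_eq_left (hlb k)]
      simp only [hG_def, this]
    have hGu : ∀ k, G (u k) = ∫ ω, VarAux.FF h (u k) (WithLp.toLp 2 (fun i => Y i ω)) ∂μ := by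
      intro k
      have : min (max (u k) a) b = u k := by
        rw [max_eq_left (hau k), min_eq_left (hub k)]
      simp only [hG_def, this]
    have hgapk : ∀ k, ∫ ω, (φ' ω - φ ω) ∂μ ≤ G (u k) - G (l k) := by
      intro k
      rw [integral_sub hφ'int hφint, hGl k, hGu k]
      have h1 : ∫ ω, φ' ω ∂μ ≤ ∫ ω, VarAux.FF h (u k) (WithLp.toLp 2 (fun i => Y i ω)) ∂μ :=
        integral_mono hφ'int (hFFint _ (lt_trans hr₀pos (hr₀u k)))
          fun ω => ciInf_le (hbddφ' ω) k
      have h2 : ∫ ω, VarAux.FF h (l k) (WithLp.toLp 2 (fun i => Y i ω)) ∂μ ≤ ∫ ω, φ ω ∂μ :=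
        integral_mono (hFFint _ (hlpos k)) hφint fun ω => le_ciSup (hbddφ ω) k
      linarith
    have hone : Tendsto (fun k : ℕ => d * (1 / ((k : ℝ) + 1))) atTop (nhds 0) := by
      simpa using tendsto_one_div_add_atTop_nhds_zero_nat.const_mul d
    have htol : Tendsto l atTop (nhds r₀) := by
      have := (tendsto_const_nhds : Tendsto (fun _ : ℕ => r₀) atTop (nhds r₀)).sub hone
      simpa [hl_def] using this
    have htou : Tendsto u atTop (nhds r₀) := by
      have := (tendsto_const_nhds : Tendsto (fun _ : ℕ => r₀) atTop (nhds r₀)).add hone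
      simpa [hu_def] using this
    have hgapto : Tendsto (fun k => G (u k) - G (l k)) atTop (nhds 0) := by
      have h1 := (hr₀cont.tendsto.comp htou).sub (hr₀cont.tendsto.comp htol)
      simpa using h1
    have hδ0 : ∫ ω, (φ' ω - φ ω) ∂μ ≤ 0 := ge_of_tendsto' hgapto hgapk
    have hδnonneg : ∀ ω, 0 ≤ φ' ω - φ ω := fun ω =>
      sub_nonneg.2 (le_trans (hsand1 ω) (hsand2 ω))
    have hδint : Integrable (fun ω => φ' ω - φ ω) μ := hφ'int.sub hφint
    have hδeq : ∫ ω, (φ' ω - φ ω) ∂μ = 0 :=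
      le_antisymm hδ0 (integral_nonneg hδnonneg)
    have hae : (fun ω => φ' ω - φ ω) =ᵐ[μ] 0 :=
      (integral_eq_zero_iff_of_nonneg hδnonneg hδint).1 hδeq
    have hψae : (fun ω => varSup h r₀ (WithLp.toLp 2 (fun i => Y i ω))) =ᵐ[μ] φ := by
      filter_upwards [hae] with ω hω
      have hφφ' : φ' ω = φ ω := by
        have : φ' ω - φ ω = 0 := hω
        linarith
      exact le_antisymm (le_trans (hsand2 ω) hφφ'.le) (hsand1 ω)
    have hψint : Integrable (fun ω => varSup h r₀ (WithLp.toLp 2 (fun i => Y i ω))) μ :=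
      VarAux.integrable_of_bound μ _ (2 * B)
        (hφmeas.aestronglyMeasurable.congr hψae.symm)
        fun ω => VarAux.abs_varSup_le hbdd hr₀pos.le
    -- law identification
    have hconsmeas : Measurable (consE m) := by
      refine (WithLp.measurable_toLp 2 _).comp
        (f := fun q : ℝ × (Fin m → ℝ) => (Fin.cons q.1 q.2 : Fin (m + 1) → ℝ)) ?_
      apply measurable_pi_lambda
      intro i
      refine Fin.cases ?_ (fun j => ?_) i
      · simpa [consE] using measurable_fst (α := ℝ) (β := Fin m → ℝ)
      · simpa [consE, Function.comp_def] using (measurable_pi_apply j).comp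
          (measurable_snd (α := ℝ) (β := Fin m → ℝ))
    have hindep : IndepFun (Y 0) (fun ω => (fun j => Y j.succ ω : Fin m → ℝ)) μ := by
      have h1 := hYind.indepFun_finset {0} ({0}ᶜ) disjoint_compl_right hYmeas
      have h2 := h1.comp (_mγ := Real.measurableSpace) (_mγ' := MeasurableSpace.pi)
        (φ := fun v : ({x // x ∈ ({0} : Finset (Fin (m + 1)))} → ℝ) =>
          v ⟨0, by simp⟩)
        (ψ := fun v : ({x // x ∈ (({0} : Finset (Fin (m + 1))))ᶜ} → ℝ) =>
          (fun j : Fin m => v ⟨j.succ, by simp [Fin.succ_ne_zero]⟩))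
        (measurable_pi_apply _)
        (measurable_pi_lambda _ fun j => measurable_pi_apply _)
      exact h2
    have hmapP : μ.map (fun ω => (Y 0 ω, (fun j => Y j.succ ω : Fin m → ℝ))) =
        (μ.map (Y 0)).prod (μ.map (fun ω => (fun j => Y j.succ ω : Fin m → ℝ))) :=
      (indepFun_iff_map_prod_eq_prod_map_map (hYmeas 0).aemeasurable
        hYsmeas.aemeasurable).1 hindep
    have hWmeas : Measurable (fun z : Ω × Ω =>
        consE m (Y 0 z.1, fun j => Y j.succ z.2)) :=
      hconsmeas.comp (((hYmeas 0).comp measurable_fst).prodMk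
        (hYsmeas.comp measurable_snd))
    have hlaw : (μ.prod μ).map (fun z : Ω × Ω => consE m (Y 0 z.1, fun j => Y j.succ z.2))
        = μ.map (fun ω => (WithLp.toLp 2 (fun i => Y i ω) : EuclideanSpace ℝ (Fin (m + 1)))) := by
      have hPm : Measurable (Prod.map (Y 0)
          (fun ω => (fun j => Y j.succ ω : Fin m → ℝ))) :=
        (hYmeas 0).prodMap hYsmeas
      calc (μ.prod μ).map (fun z : Ω × Ω => consE m (Y 0 z.1, fun j => Y j.succ z.2))
          = ((μ.prod μ).map (Prod.map (Y 0)
              (fun ω => (fun j => Y j.succ ω : Fin m → ℝ)))).map (consE m) :=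
            (Measure.map_map hconsmeas hPm).symm
        _ = ((μ.map (Y 0)).prod
              (μ.map (fun ω => (fun j => Y j.succ ω : Fin m → ℝ)))).map (consE m) := by
            rw [← Measure.map_prod_map μ μ (hYmeas 0) hYsmeas]
        _ = (μ.map (fun ω => (Y 0 ω, (fun j => Y j.succ ω : Fin m → ℝ)))).map
              (consE m) := by rw [hmapP]
        _ = μ.map (fun ω => (WithLp.toLp 2 (fun i => Y i ω) : EuclideanSpace ℝ (Fin (m + 1)))) := by
            rw [Measure.map_map hconsmeas ((hYmeas 0).prodMk hYsmeas)]
            congr 1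
            funext ω
            ext i
            refine Fin.cases ?_ (fun j => ?_) i
            · simp [consE, Function.comp]
            · simp [consE, Function.comp]
    -- the main chain of inequalities
    have hFFWint : Integrable (fun z : Ω × Ω =>
        VarAux.FF h a (consE m (Y 0 z.1, fun j => Y j.succ z.2))) (μ.prod μ) :=
      VarAux.integrable_of_bound _ _ (2 * B)
        ((VarAux.measurable_FF hmeas hbdd ha0).comp hWmeas).aestronglyMeasurable
        fun z => VarAux.abs_FF_le hbdd ha0
    have step2 : (∫ ω, (⨆ x : {x : ℝ // |x - Y 0 ω| ≤ ε}, |g₁ x.1 - g₁ (Y 0 ω)|) ∂μ)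
        ≤ ∫ ω, (∫ ω', VarAux.FF h a (consE m (Y 0 ω, fun j => Y j.succ ω')) ∂μ) ∂μ := by
      refine integral_mono_of_nonneg (Filter.Eventually.of_forall fun ω => ?_)
        hFFWint.integral_prod_left (Filter.Eventually.of_forall fun ω => ?_)
      · have h0 := le_ciSup (hbddg (Y 0 ω)) ⟨Y 0 ω, by simpa using hε.le⟩
        simpa using h0
      · haveI : Nonempty {x : ℝ // |x - Y 0 ω| ≤ ε} :=
          ⟨⟨Y 0 ω, by simpa using hε.le⟩⟩
        refine ciSup_le ?_
        rintro ⟨x, hx⟩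
        have hdiff : g₁ x - g₁ (Y 0 ω) = ∫ ω', (h (WithLp.toLp 2 (Fin.cons x (fun j => Y j.succ ω') : Fin (m + 1) → ℝ))
            - h (WithLp.toLp 2 (Fin.cons (Y 0 ω) (fun j => Y j.succ ω') : Fin (m + 1) → ℝ))) ∂μ := by
          rw [hg₁ x, hg₁ (Y 0 ω), integral_sub (hIx x) (hIx (Y 0 ω))]
          ring
        have hsecint : Integrable (fun ω' =>
            VarAux.FF h a (consE m (Y 0 ω, fun j => Y j.succ ω'))) μ :=
          VarAux.integrable_of_bound μ _ (2 * B)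
            ((VarAux.measurable_FF hmeas hbdd ha0).comp
              (hconsmeas.comp (measurable_const.prodMk hYsmeas))).aestronglyMeasurable
            fun ω' => VarAux.abs_FF_le hbdd ha0
        calc |g₁ x - g₁ (Y 0 ω)|
            ≤ ∫ ω', |h (WithLp.toLp 2 (Fin.cons x (fun j => Y j.succ ω') : Fin (m + 1) → ℝ))
                - h (WithLp.toLp 2 (Fin.cons (Y 0 ω) (fun j => Y j.succ ω') : Fin (m + 1) → ℝ))| ∂μ := by
              rw [hdiff]
              simpa [Real.norm_eq_abs] using norm_integral_le_integral_norm
                (μ := μ) (f := fun ω' => h (WithLp.toLp 2 (Fin.cons x (fun j => Y j.succ ω') : Fin (m + 1) → ℝ))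
                  - h (WithLp.toLp 2 (Fin.cons (Y 0 ω) (fun j => Y j.succ ω') : Fin (m + 1) → ℝ)))
          _ ≤ ∫ ω', VarAux.FF h a (consE m (Y 0 ω, fun j => Y j.succ ω')) ∂μ := by
              refine integral_mono ((hIx x).sub (hIx (Y 0 ω))).abs hsecint ?_
              intro ω'
              have hdq : @dist (EuclideanSpace ℝ (Fin (m + 1))) _
                  (WithLp.toLp 2 (Fin.cons x (fun j => Y j.succ ω') : Fin (m + 1) → ℝ))
                  (consE m (Y 0 ω, fun j => Y j.succ ω')) < a := by
                have hre : consE m (Y 0 ω, fun j => Y j.succ ω')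
                    = WithLp.toLp 2 (Fin.cons (Y 0 ω) (fun j => Y j.succ ω') : Fin (m + 1) → ℝ) := rfl
                rw [hre, VarAux.dist_cons]
                exact lt_of_le_of_lt hx hεa
              exact VarAux.abs_le_FF hbdd hdq
    have step3 : ∫ ω, (∫ ω', VarAux.FF h a (consE m (Y 0 ω, fun j => Y j.succ ω')) ∂μ) ∂μ
        = ∫ ω, VarAux.FF h a (WithLp.toLp 2 (fun i => Y i ω)) ∂μ := by
      have hFFsm1 : AEStronglyMeasurable (VarAux.FF h a)
          ((μ.prod μ).map (fun z : Ω × Ω => consE m (Y 0 z.1, fun j => Y j.succ z.2))) :=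
        (VarAux.measurable_FF hmeas hbdd ha0).aestronglyMeasurable
      have hFFsm2 : AEStronglyMeasurable (VarAux.FF h a)
          (μ.map (fun ω => (WithLp.toLp 2 (fun i => Y i ω) : EuclideanSpace ℝ (Fin (m + 1))))) :=
        (VarAux.measurable_FF hmeas hbdd ha0).aestronglyMeasurable
      calc ∫ ω, (∫ ω', VarAux.FF h a (consE m (Y 0 ω, fun j => Y j.succ ω')) ∂μ) ∂μ
          = ∫ z : Ω × Ω, VarAux.FF h a (consE m (Y 0 z.1, fun j => Y j.succ z.2))
              ∂(μ.prod μ) :=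
            integral_integral (f := fun ω ω' =>
              VarAux.FF h a (consE m (Y 0 ω, fun j => Y j.succ ω'))) hFFWint
        _ = ∫ p, VarAux.FF h a p ∂((μ.prod μ).map
              (fun z : Ω × Ω => consE m (Y 0 z.1, fun j => Y j.succ z.2))) :=
            (integral_map hWmeas.aemeasurable hFFsm1).symm
        _ = ∫ p, VarAux.FF h a p
              ∂(μ.map (fun ω => (WithLp.toLp 2 (fun i => Y i ω) : EuclideanSpace ℝ (Fin (m + 1))))) := by
            rw [hlaw]
        _ = ∫ ω, VarAux.FF h a (WithLp.toLp 2 (fun i => Y i ω)) ∂μ :=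
            integral_map hYvmeas.aemeasurable hFFsm2
    have step5 : ∫ ω, VarAux.FF h a (WithLp.toLp 2 (fun i => Y i ω)) ∂μ
        ≤ ∫ ω, varSup h r₀ (WithLp.toLp 2 (fun i => Y i ω)) ∂μ :=
      integral_mono (hFFint a ha0) hψint
        fun ω => VarAux.FF_le_varSup hbdd ha0 har₀.le
    have step6 : ∫ ω, varSup h r₀ (WithLp.toLp 2 (fun i => Y i ω)) ∂μ ≤ L * r₀ :=
      hvar r₀ hr₀pos (lt_trans hr₀b hbε₀)
    calc (∫ ω, (⨆ x : {x : ℝ // |x - Y 0 ω| ≤ ε}, |g₁ x.1 - g₁ (Y 0 ω)|) ∂μ)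
        ≤ ∫ ω, (∫ ω', VarAux.FF h a (consE m (Y 0 ω, fun j => Y j.succ ω')) ∂μ) ∂μ :=
          step2
      _ = ∫ ω, VarAux.FF h a (WithLp.toLp 2 (fun i => Y i ω)) ∂μ := step3
      _ ≤ ∫ ω, varSup h r₀ (WithLp.toLp 2 (fun i => Y i ω)) ∂μ := step5
      _ ≤ L * r₀ := step6
      _ ≤ L * b := mul_le_mul_of_nonneg_left hr₀b.le hL0
  -- conclude by letting b ↓ ε
  refine le_of_forall_pos_le_add fun η hη => ?_
  have hL1 : (0 : ℝ) < L + 1 := by linarith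
  have hb1 : ε < min (ε + η / (L + 1)) ((ε + ε₀) / 2) := by
    refine lt_min ?_ (by linarith)
    have : 0 < η / (L + 1) := by positivity
    linarith
  have hb2 : min (ε + η / (L + 1)) ((ε + ε₀) / 2) < ε₀ :=
    lt_of_le_of_lt (min_le_right _ _) (by linarith)
  have h1 := key _ hb1 hb2
  have h2 : L * min (ε + η / (L + 1)) ((ε + ε₀) / 2) ≤ L * ε + η := by
    have h3 : L * min (ε + η / (L + 1)) ((ε + ε₀) / 2) ≤ L * (ε + η / (L + 1)) :=
      mul_le_mul_of_nonneg_left (min_le_left _ _) hL0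
    have h4 : L * (η / (L + 1)) ≤ η := by
      rw [mul_comm, div_mul_eq_mul_div, div_le_iff₀ hL1]
      nlinarith
    nlinarith
  linarith
end

section
/- Let h: ℝ^m → ℝ be Lipschitz continuous with constant L̃, let X₁',...,X_m' be independent real random variables such that h(X₁',...,X_m') has a bounded density h_F with sup h_F ≤ M. Then for all t ∈ ℝ and ε > 0, E[sup_{‖(x₁,...,x_m)-(X₁',...,X_m')‖ ≤ ε} |1[h(x₁,...,x_m) ≤ t] - 1[h(X₁',...,X_m') ≤ t]|] ≤ 2 L̃ M ε; in particular the family of kernels g(x₁,...,x_m,t) = 1[h(x₁,...,x_m) ≤ t] satisfies the variation condition uniformly in t. -/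
open MeasureTheory ProbabilityTheory

open Classical in
/-- Real-valued indicator of a proposition. -/
noncomputable def ind (p : Prop) : ℝ := if p then 1 else 0

/-- Variation condition, uniformly in `t`, for the indicator kernels `1[h(·) ≤ t]` of a
Lipschitz kernel whose value at the random point has a bounded density. -/
theorem stmt3 {m : ℕ} {Ω : Type*} [MeasurableSpace Ω] (μ : Measure Ω) [IsProbabilityMeasure μ]
    (h : EuclideanSpace ℝ (Fin m) → ℝ) (Ltilde : NNReal)
    (hlip : LipschitzWith Ltilde h)
    (X : Ω → EuclideanSpace ℝ (Fin m))
    (hX : ∀ i, Measurable fun ω => X ω i)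
    (hind : iIndepFun (fun i ω => X ω i) μ)
    (hF : ℝ → ℝ) (M : ℝ) (hFnonneg : ∀ x, 0 ≤ hF x) (hFbdd : ∀ x, hF x ≤ M)
    -- `h(X₁',...,X_m')` has density `hF` with respect to Lebesgue measure
    (hdens : μ.map (fun ω => h (X ω)) =
      MeasureTheory.volume.withDensity (fun x => ENNReal.ofReal (hF x))) :
    ∀ (t : ℝ) (ε : ℝ), 0 < ε →
      ∫ ω, (⨆ x : {x : EuclideanSpace ℝ (Fin m) // dist x (X ω) ≤ ε},
          |ind (h x.1 ≤ t) - ind (h (X ω) ≤ t)|) ∂μ ≤ 2 * (Ltilde : ℝ) * M * ε := by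
  intro t ε hε
  have hM : 0 ≤ M := le_trans (hFnonneg 0) (hFbdd 0)
  have hLε : (0:ℝ) ≤ (Ltilde : ℝ) * ε := mul_nonneg Ltilde.coe_nonneg hε.le
  set a : ℝ := t - Ltilde * ε with ha
  set b : ℝ := t + Ltilde * ε with hb
  have hXmeas : Measurable X := (WithLp.measurable_toLp 2 _).comp (measurable_pi_iff.mpr hX)
  have hhX : Measurable (fun ω => h (X ω)) := hlip.continuous.measurable.comp hXmeas
  set g : Ω → ℝ := fun ω =>
    Set.indicator ((fun ω => h (X ω)) ⁻¹' Set.Icc a b) (fun _ => (1:ℝ)) ω with hg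
  have hpre : MeasurableSet ((fun ω => h (X ω)) ⁻¹' Set.Icc a b) := hhX measurableSet_Icc
  have hg_meas : Measurable g := (measurable_const.indicator hpre)
  have hg_nonneg : ∀ ω, 0 ≤ g ω := fun ω => by
    rw [hg]; exact Set.indicator_nonneg (fun y _ => zero_le_one) ω
  have hg_int : Integrable g μ := by
    refine (integrable_const (1:ℝ)).mono' hg_meas.aestronglyMeasurable (ae_of_all _ fun ω => ?_)
    rw [Real.norm_eq_abs, abs_of_nonneg (hg_nonneg ω)]
    rw [hg]
    exact Set.indicator_le' (fun _ _ => le_refl 1) (fun _ _ => zero_le_one) ω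
  -- pointwise bound on the sup
  have hptwise : ∀ ω, (⨆ x : {x : EuclideanSpace ℝ (Fin m) // dist x (X ω) ≤ ε},
      |ind (h x.1 ≤ t) - ind (h (X ω) ≤ t)|) ≤ g ω := by
    intro ω
    have hne : Nonempty {x : EuclideanSpace ℝ (Fin m) // dist x (X ω) ≤ ε} :=
      ⟨⟨X ω, by simp [hε.le]⟩⟩
    refine ciSup_le fun x => ?_
    have hdist : |h x.1 - h (X ω)| ≤ (Ltilde : ℝ) * ε := by
      have := hlip.dist_le_mul x.1 (X ω)
      rw [Real.dist_eq] at this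
      exact this.trans (mul_le_mul_of_nonneg_left x.2 Ltilde.coe_nonneg)
    by_cases h1 : h x.1 ≤ t <;> by_cases h2 : h (X ω) ≤ t
    · simpa [ind, h1, h2] using hg_nonneg ω
    · have hmem : h (X ω) ∈ Set.Icc a b := by
        constructor
        · have : t ≤ h (X ω) := le_of_not_ge h2
          linarith
        · have h3 : h (X ω) - h x.1 ≤ (Ltilde : ℝ) * ε := by
            have h4 := (abs_le.mp hdist).1; linarith
          linarith
      have hgone : g ω = 1 :=
        Set.indicator_of_mem (show ω ∈ (fun ω => h (X ω)) ⁻¹' Set.Icc a b from hmem) _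
      rw [hgone]
      simp [ind, h1, h2]
    · have hmem : h (X ω) ∈ Set.Icc a b := by
        constructor
        · have h3 : h x.1 - h (X ω) ≤ (Ltilde : ℝ) * ε := (abs_le.mp hdist).2
          have ht : t < h x.1 := lt_of_not_ge h1
          linarith
        · linarith
      have hgone : g ω = 1 :=
        Set.indicator_of_mem (show ω ∈ (fun ω => h (X ω)) ⁻¹' Set.Icc a b from hmem) _
      rw [hgone]
      simp [ind, h1, h2]
    · simpa [ind, h1, h2] using hg_nonneg ω
  have hsup_nonneg : ∀ ω, 0 ≤ (⨆ x : {x : EuclideanSpace ℝ (Fin m) // dist x (X ω) ≤ ε},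
      |ind (h x.1 ≤ t) - ind (h (X ω) ≤ t)|) := fun ω =>
    Real.iSup_nonneg fun x => abs_nonneg _
  have hint_le : ∫ ω, (⨆ x : {x : EuclideanSpace ℝ (Fin m) // dist x (X ω) ≤ ε},
      |ind (h x.1 ≤ t) - ind (h (X ω) ≤ t)|) ∂μ ≤ ∫ ω, g ω ∂μ :=
    integral_mono_of_nonneg (ae_of_all _ hsup_nonneg) hg_int (ae_of_all _ hptwise)
  refine hint_le.trans ?_
  -- compute ∫ g
  have hgval : ∫ ω, g ω ∂μ = (μ ((fun ω => h (X ω)) ⁻¹' Set.Icc a b)).toReal := by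
    rw [hg, integral_indicator_const (1:ℝ) hpre]; simp; rfl
  rw [hgval]
  have hmap : μ ((fun ω => h (X ω)) ⁻¹' Set.Icc a b)
      = (μ.map (fun ω => h (X ω))) (Set.Icc a b) := by
    rw [Measure.map_apply hhX measurableSet_Icc]
  rw [hmap, hdens, withDensity_apply _ measurableSet_Icc]
  have hbound : ∫⁻ x in Set.Icc a b, ENNReal.ofReal (hF x) ∂volume
      ≤ ENNReal.ofReal M * volume (Set.Icc a b) := by
    calc ∫⁻ x in Set.Icc a b, ENNReal.ofReal (hF x) ∂volume
        ≤ ∫⁻ _ in Set.Icc a b, ENNReal.ofReal M ∂volume :=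
          lintegral_mono fun x => ENNReal.ofReal_le_ofReal (hFbdd x)
      _ = ENNReal.ofReal M * volume (Set.Icc a b) := by
          rw [lintegral_const, Measure.restrict_apply MeasurableSet.univ, Set.univ_inter]
  have hvol : volume (Set.Icc a b) = ENNReal.ofReal (2 * (Ltilde:ℝ) * ε) := by
    rw [Real.volume_Icc, ha, hb]; congr 1; ring
  have hfin : ENNReal.ofReal M * volume (Set.Icc a b) ≠ ⊤ := by
    rw [hvol]; exact ENNReal.mul_ne_top ENNReal.ofReal_ne_top ENNReal.ofReal_ne_top
  calc (∫⁻ x in Set.Icc a b, ENNReal.ofReal (hF x) ∂volume).toReal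
      ≤ (ENNReal.ofReal M * volume (Set.Icc a b)).toReal :=
        ENNReal.toReal_mono hfin hbound
    _ = M * (2 * (Ltilde:ℝ) * ε) := by
        rw [hvol, ← ENNReal.ofReal_mul hM, ENNReal.toReal_ofReal]
        positivity
    _ = 2 * (Ltilde : ℝ) * M * ε := by ring
end

section
/- Fix n, k, l ∈ ℕ with k ≥ 2. The number of 2k-tuples (i₁,...,i_{2k}) with each i_j ∈ {1,...,n} whose order statistics i_{(1)} ≤ i_{(2)} ≤ ... ≤ i_{(2k)} satisfy max{i_{(2)} - i_{(1)}, i_{(2k)} - i_{(2k-1)}} = l is at most (2k)! · l · n^{2k-2} (for l ≥ 1), and at most (2k)! · n^{2k-2} for l = 0. -/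
/-- The `j`-th order statistic (0-indexed) of a tuple of natural numbers. -/
def sortedVal {N : ℕ} (t : Fin N → ℕ) (j : ℕ) : ℕ :=
  ((List.ofFn t).mergeSort (· ≤ ·)).getD j 0

/-- `max { i₍₂₎ - i₍₁₎ , i₍₂ₖ₎ - i₍₂ₖ₋₁₎ }` for a tuple of `2k` indices. -/
def maxGap {N : ℕ} (t : Fin N → ℕ) : ℕ :=
  max (sortedVal t 1 - sortedVal t 0) (sortedVal t (N - 1) - sortedVal t (N - 2))

namespace S5

def sl {M : ℕ} (w : Fin M → ℕ) : List ℕ := (List.ofFn w).mergeSort (· ≤ ·)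

lemma sl_length {M} (w : Fin M → ℕ) : (sl w).length = M := by
  simp [sl, List.length_mergeSort]

lemma sl_sorted {M} (w : Fin M → ℕ) : (sl w).Pairwise (· ≤ ·) := by
  have := List.pairwise_mergeSort' (r := (· ≤ ·)) (List.ofFn w)
  simpa [sl] using this

lemma sl_perm {M} (w : Fin M → ℕ) : List.Perm (sl w) (List.ofFn w) := List.mergeSort_perm _ _

lemma sortedVal_def {M} (w : Fin M → ℕ) (j : ℕ) : sortedVal w j = (sl w).getD j 0 := rfl

lemma sortedVal_eq_getElem {M} (w : Fin M → ℕ) {j : ℕ} (hj : j < M) :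
    sortedVal w j = (sl w)[j]'(by rw [sl_length]; exact hj) := by
  rw [sortedVal_def, List.getD_eq_getElem]

lemma sortedVal_mem {M} (w : Fin M → ℕ) {j : ℕ} (hj : j < M) : ∃ i, w i = sortedVal w j := by
  rw [sortedVal_eq_getElem w hj]
  have hmem : (sl w)[j]'(by rw [sl_length]; exact hj) ∈ sl w := List.getElem_mem _
  have := (sl_perm w).mem_iff.mp hmem
  rw [List.mem_ofFn] at this
  obtain ⟨i, hi⟩ := this
  exact ⟨i, hi⟩

lemma sortedVal_mono {M} (w : Fin M → ℕ) {i j : ℕ} (hij : i ≤ j) (hj : j < M) :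
    sortedVal w i ≤ sortedVal w j := by
  rw [sortedVal_eq_getElem w (lt_of_le_of_lt hij hj), sortedVal_eq_getElem w hj]
  have := (sl_sorted w).rel_get_of_le (a := ⟨i, by rw [sl_length]; omega⟩)
    (b := ⟨j, by rw [sl_length]; exact hj⟩) (by simpa [Fin.le_def] using hij)
  simpa using this

lemma sortedVal_zero_le {M} (w : Fin M → ℕ) (i : Fin M) : sortedVal w 0 ≤ w i := by
  have hM : 0 < M := i.pos
  have hmem : w i ∈ sl w := (sl_perm w).mem_iff.mpr (by rw [List.mem_ofFn]; exact ⟨i, rfl⟩)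
  obtain ⟨j, hj, hval⟩ := List.getElem_of_mem hmem
  rw [sortedVal_eq_getElem w hM, ← hval]
  have := (sl_sorted w).rel_get_of_le (a := ⟨0, by omega⟩) (b := ⟨j, hj⟩)
    (by simp [Fin.le_def])
  simpa using this

lemma le_sortedVal_last {M} (w : Fin (M+1) → ℕ) (i : Fin (M+1)) : w i ≤ sortedVal w M := by
  have hmem : w i ∈ sl w := (sl_perm w).mem_iff.mpr (by rw [List.mem_ofFn]; exact ⟨i, rfl⟩)
  obtain ⟨j, hj, hval⟩ := List.getElem_of_mem hmem
  rw [sortedVal_eq_getElem w (Nat.lt_succ_self M), ← hval]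
  have hj' : j ≤ M := by have := sl_length w; omega
  have := (sl_sorted w).rel_get_of_le (a := ⟨j, hj⟩) (b := ⟨M, by rw [sl_length]; omega⟩)
    (by simpa [Fin.le_def] using hj')
  simpa using this

lemma ofFn_perm {M : ℕ} (w : Fin (M+1) → ℕ) (p : Fin (M+1)) :
    List.Perm (List.ofFn w) (w p :: List.ofFn (w ∘ p.succAbove)) := by
  rw [← Multiset.coe_eq_coe]
  have h1 : ((List.ofFn w : List ℕ) : Multiset ℕ) = Multiset.map w Finset.univ.val := by
    rw [List.ofFn_eq_map, Fin.univ_def]; rfl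
  have h2 : ((List.ofFn (w ∘ p.succAbove) : List ℕ) : Multiset ℕ)
      = Multiset.map (w ∘ p.succAbove) Finset.univ.val := by
    rw [List.ofFn_eq_map, Fin.univ_def]; rfl
  rw [show ((w p :: List.ofFn (w ∘ p.succAbove) : List ℕ) : Multiset ℕ)
      = w p ::ₘ ((List.ofFn (w ∘ p.succAbove) : List ℕ) : Multiset ℕ) from rfl,
    h1, h2, Fin.univ_succAbove M p, Finset.cons_val, Multiset.map_cons, Finset.map_val,
    Multiset.map_map]
  rfl


/-- removing a minimum -/
lemma sl_min_remove {M} (w : Fin (M+1) → ℕ) (p : Fin (M+1)) (hp : ∀ j, w p ≤ w j) :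
    sl w = w p :: sl (w ∘ p.succAbove) := by
  apply List.Perm.eq_of_pairwise' (r := (· ≤ ·)) (l₂ := w p :: sl (w ∘ p.succAbove)) (sl_sorted w)
  · rw [List.pairwise_cons]
    refine ⟨fun b hb => ?_, sl_sorted _⟩
    have := (sl_perm (w ∘ p.succAbove)).mem_iff.mp hb
    rw [List.mem_ofFn] at this
    obtain ⟨i, hi⟩ := this
    rw [← hi]
    exact hp _
  · exact (sl_perm w).trans ((ofFn_perm w p).trans (List.Perm.cons _ (sl_perm _).symm))


/-- removing a maximum -/
lemma sl_max_remove {M} (w : Fin (M+1) → ℕ) (q : Fin (M+1)) (hq : ∀ j, w j ≤ w q) :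
    sl w = sl (w ∘ q.succAbove) ++ [w q] := by
  apply List.Perm.eq_of_pairwise' (r := (· ≤ ·)) (l₂ := sl (w ∘ q.succAbove) ++ [w q]) (sl_sorted w)
  · rw [List.pairwise_append]
    refine ⟨sl_sorted _, by simp, fun x hx y hy => ?_⟩
    have := (sl_perm (w ∘ q.succAbove)).mem_iff.mp hx
    rw [List.mem_ofFn] at this
    obtain ⟨i, hi⟩ := this
    simp only [List.mem_singleton] at hy
    rw [hy, ← hi]
    exact hq _
  · refine (sl_perm w).trans ((ofFn_perm w q).trans ?_)
    refine List.Perm.trans (List.Perm.cons _ (sl_perm _).symm) ?_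
    exact (List.perm_append_singleton _ _).symm

lemma sortedVal_min_remove {M} (w : Fin (M+1) → ℕ) (p : Fin (M+1)) (hp : ∀ j, w p ≤ w j)
    (i : ℕ) : sortedVal w (i+1) = sortedVal (w ∘ p.succAbove) i := by
  rw [sortedVal_def, sortedVal_def, sl_min_remove w p hp, List.getD_cons_succ]

lemma sortedVal_min_eq {M} (w : Fin (M+1) → ℕ) (p : Fin (M+1)) (hp : ∀ j, w p ≤ w j) :
    sortedVal w 0 = w p := by
  rw [sortedVal_def, sl_min_remove w p hp, List.getD_cons_zero]

lemma sortedVal_max_remove {M} (w : Fin (M+1) → ℕ) (q : Fin (M+1)) (hq : ∀ j, w j ≤ w q)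
    {i : ℕ} (hi : i < M) : sortedVal w i = sortedVal (w ∘ q.succAbove) i := by
  rw [sortedVal_def, sortedVal_def, sl_max_remove w q hq,
    List.getD_append _ _ _ _ (by rw [sl_length]; exact hi)]

lemma sortedVal_max_eq {M} (w : Fin (M+1) → ℕ) (q : Fin (M+1)) (hq : ∀ j, w j ≤ w q) :
    sortedVal w M = w q := by
  rw [sortedVal_def, sl_max_remove w q hq,
    List.getD_append_right _ _ _ _ (by rw [sl_length])]
  rw [sl_length]
  simp

variable {n M : ℕ}

def Fv {M : ℕ} {n : ℕ} (u : Fin M → Fin n) : Fin M → ℕ := fun j => (u j : ℕ) + 1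

lemma Fv_removeNth {M n : ℕ} (u : Fin (M+1) → Fin n) (p : Fin (M+1)) :
    Fv (Fin.removeNth p u) = (Fv u) ∘ p.succAbove := rfl

def maxSet (u : Fin M → Fin n) : Finset (Fin M) :=
  Finset.univ.filter (fun q => ∀ j, u j ≤ u q)

def minSet (u : Fin M → Fin n) : Finset (Fin M) :=
  Finset.univ.filter (fun p => ∀ j, u p ≤ u j)

lemma maxSet_nonempty [NeZero M] (u : Fin M → Fin n) : (maxSet u).Nonempty := by
  obtain ⟨q, hq⟩ := Finite.exists_max u
  exact ⟨q, by simp [maxSet]; exact hq⟩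

lemma minSet_nonempty [NeZero M] (u : Fin M → Fin n) : (minSet u).Nonempty := by
  obtain ⟨q, hq⟩ := Finite.exists_min u
  exact ⟨q, by simp [minSet]; exact hq⟩

noncomputable def pmax [NeZero M] (u : Fin M → Fin n) : Fin M :=
  (maxSet u).min' (maxSet_nonempty u)

noncomputable def pmin [NeZero M] (u : Fin M → Fin n) : Fin M :=
  (minSet u).min' (minSet_nonempty u)

noncomputable def pmax2 [NeZero M] (u : Fin M → Fin n) : Fin M :=
  if h : ((maxSet u).erase (pmax u)).Nonempty then ((maxSet u).erase (pmax u)).min' h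
  else pmax u

noncomputable def pmin2 [NeZero M] (u : Fin M → Fin n) : Fin M :=
  if h : ((minSet u).erase (pmin u)).Nonempty then ((minSet u).erase (pmin u)).min' h
  else pmin u

lemma pmax_spec [NeZero M] (u : Fin M → Fin n) : ∀ j, u j ≤ u (pmax u) := by
  have := (maxSet u).min'_mem (maxSet_nonempty u)
  simpa [maxSet, pmax] using this

lemma pmin_spec [NeZero M] (u : Fin M → Fin n) : ∀ j, u (pmin u) ≤ u j := by
  have := (minSet u).min'_mem (minSet_nonempty u)
  simpa [minSet, pmin] using this

lemma pmax_le [NeZero M] (u : Fin M → Fin n) {x : Fin M} (hx : x ∈ maxSet u) :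
    pmax u ≤ x := Finset.min'_le _ _ hx

lemma pmin_le [NeZero M] (u : Fin M → Fin n) {x : Fin M} (hx : x ∈ minSet u) :
    pmin u ≤ x := Finset.min'_le _ _ hx

lemma pmax2_spec [NeZero M] (u : Fin M → Fin n)
    (h : ((maxSet u).erase (pmax u)).Nonempty) :
    pmax2 u ∈ (maxSet u).erase (pmax u) := by
  rw [pmax2, dif_pos h]; exact Finset.min'_mem _ _

lemma pmin2_spec [NeZero M] (u : Fin M → Fin n)
    (h : ((minSet u).erase (pmin u)).Nonempty) :
    pmin2 u ∈ (minSet u).erase (pmin u) := by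
  rw [pmin2, dif_pos h]; exact Finset.min'_mem _ _


lemma fv_le {m n : ℕ} {u : Fin m → Fin n} {i j : Fin m} (h : u i ≤ u j) : Fv u i ≤ Fv u j := by
  simp only [Fv, add_le_add_iff_right]
  exact h

lemma sortedVal_rm_max {M n : ℕ} (u : Fin (M+1) → Fin n) {q : Fin (M+1)} (hq : ∀ j, u j ≤ u q)
    {i : ℕ} (hi : i < M) :
    sortedVal (Fv u) i = sortedVal (Fv (Fin.removeNth q u)) i := by
  rw [Fv_removeNth]
  exact sortedVal_max_remove (Fv u) q (fun j => fv_le (hq j)) hi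

lemma sortedVal_last_max {M n : ℕ} (u : Fin (M+1) → Fin n) {q : Fin (M+1)} (hq : ∀ j, u j ≤ u q) :
    sortedVal (Fv u) M = (u q : ℕ) + 1 :=
  sortedVal_max_eq (Fv u) q (fun j => fv_le (hq j))

lemma sortedVal_rm_min {M n : ℕ} (u : Fin (M+1) → Fin n) {p : Fin (M+1)} (hp : ∀ j, u p ≤ u j)
    (i : ℕ) :
    sortedVal (Fv u) (i+1) = sortedVal (Fv (Fin.removeNth p u)) i := by
  rw [Fv_removeNth]
  exact sortedVal_min_remove (Fv u) p (fun j => fv_le (hp j)) i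

lemma sortedVal_zero_min {M n : ℕ} (u : Fin (M+1) → Fin n) {p : Fin (M+1)} (hp : ∀ j, u p ≤ u j) :
    sortedVal (Fv u) 0 = (u p : ℕ) + 1 :=
  sortedVal_min_eq (Fv u) p (fun j => fv_le (hp j))

set_option maxHeartbeats 1000000 in
/-- Count of tuples whose top gap is between 1 and l. -/
lemma count_tg_between (m n l : ℕ) (hl : 1 ≤ l) :
    ((Finset.univ : Finset (Fin (m+2) → Fin n)).filter
      (fun u => 1 ≤ sortedVal (Fv u) (m+1) - sortedVal (Fv u) m ∧
        sortedVal (Fv u) (m+1) - sortedVal (Fv u) m ≤ l)).card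
    ≤ (m+2) * (l * n ^ (m+1)) := by
  classical
  have key : ∀ u : Fin (m+2) → Fin n,
      (u (pmax u) : ℕ) + 1 = sortedVal (Fv (Fin.removeNth (pmax u) u)) m
        + (sortedVal (Fv u) (m+1) - sortedVal (Fv u) m) := by
    intro u
    have h1 : sortedVal (Fv u) (m+1) = (u (pmax u) : ℕ) + 1 := sortedVal_last_max u (pmax_spec u)
    have h2 : sortedVal (Fv u) m = sortedVal (Fv (Fin.removeNth (pmax u) u)) m :=
      sortedVal_rm_max u (pmax_spec u) (Nat.lt_succ_self m)
    have h3 : sortedVal (Fv u) m ≤ sortedVal (Fv u) (m+1) :=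
      sortedVal_mono (Fv u) (Nat.le_succ m) (by omega)
    omega
  have hcard : ((Finset.univ : Finset (Fin (m+2) × Fin l × (Fin (m+1) → Fin n)))).card
      = (m+2) * (l * n ^ (m+1)) := by
    simp [Fintype.card_fun]
  rw [← hcard]
  apply Finset.card_le_card_of_injOn
    (f := fun u => ((pmax u, ⟨(sortedVal (Fv u) (m+1) - sortedVal (Fv u) m - 1) % l,
      Nat.mod_lt _ hl⟩,
      Fin.removeNth (pmax u) u) : Fin (m+2) × Fin l × (Fin (m+1) → Fin n)))
  · intro u _
    exact Finset.mem_univ _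
  · intro u hu v hv heq
    simp only [Finset.coe_filter, Set.mem_setOf_eq, Finset.mem_univ, true_and] at hu hv
    obtain ⟨hq, hb, hr⟩ : pmax u = pmax v ∧
        ((sortedVal (Fv u) (m+1) - sortedVal (Fv u) m - 1) % l : ℕ)
          = ((sortedVal (Fv v) (m+1) - sortedVal (Fv v) m - 1) % l : ℕ) ∧
        Fin.removeNth (pmax u) u = Fin.removeNth (pmax v) v := by
      rw [Prod.ext_iff, Prod.ext_iff] at heq
      exact ⟨heq.1, Fin.val_eq_of_eq heq.2.1, heq.2.2⟩
    rw [Nat.mod_eq_of_lt (by omega), Nat.mod_eq_of_lt (by omega)] at hb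
    rw [hq] at hr
    have hval : u (pmax v) = v (pmax v) := by
      have k1 := key u
      have k2 := key v
      rw [hq] at k1
      rw [hr] at k1
      exact Fin.val_injective (by omega)
    have h1 := Fin.insertNth_self_removeNth (pmax v) u
    have h2 := Fin.insertNth_self_removeNth (pmax v) v
    conv_lhs => rw [← h1]
    rw [hval, hr, h2]

lemma maxSet_mem_iff {M n : ℕ} {u : Fin M → Fin n} {x : Fin M} :
    x ∈ maxSet u ↔ ∀ j, u j ≤ u x := by simp [maxSet]

lemma minSet_mem_iff {M n : ℕ} {u : Fin M → Fin n} {x : Fin M} :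
    x ∈ minSet u ↔ ∀ j, u x ≤ u j := by simp [minSet]

lemma second_max_exists {m n : ℕ} (u : Fin (m+2) → Fin n)
    (h0 : sortedVal (Fv u) (m+1) = sortedVal (Fv u) m) :
    ((maxSet u).erase (pmax u)).Nonempty := by
  have h1 : sortedVal (Fv u) (m+1) = (u (pmax u) : ℕ) + 1 := sortedVal_last_max u (pmax_spec u)
  have h2 : sortedVal (Fv u) m = sortedVal (Fv (Fin.removeNth (pmax u) u)) m :=
    sortedVal_rm_max u (pmax_spec u) (Nat.lt_succ_self m)
  obtain ⟨i, hi⟩ := sortedVal_mem (Fv (Fin.removeNth (pmax u) u)) (Nat.lt_succ_self m)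
  have hvali : u ((pmax u).succAbove i) = u (pmax u) := by
    apply Fin.val_injective
    have e1 : (u ((pmax u).succAbove i) : ℕ) + 1
        = sortedVal (Fv (Fin.removeNth (pmax u) u)) m := by
      rw [← hi]; rfl
    omega
  refine ⟨(pmax u).succAbove i, Finset.mem_erase.mpr ⟨Fin.succAbove_ne _ _, ?_⟩⟩
  rw [maxSet_mem_iff, hvali]
  exact pmax_spec u

/-- discriminating predicate: some maximum of `r` occurs before position `q`. -/
def Pdisc {M n : ℕ} (q : Fin (M+1)) (r : Fin M → Fin n) : Prop :=
  ∃ i : Fin M, ((i : ℕ) < (q : ℕ)) ∧ ∀ j, r j ≤ r i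

lemma pdisc_pmax2 {m n : ℕ} (u : Fin (m+2) → Fin n)
    (h0 : sortedVal (Fv u) (m+1) = sortedVal (Fv u) m) :
    Pdisc (pmax2 u) (Fin.removeNth (pmax2 u) u) := by
  have hne := second_max_exists u h0
  have hmem := pmax2_spec u hne
  rw [Finset.mem_erase] at hmem
  have hlt : pmax u < pmax2 u := lt_of_le_of_ne (pmax_le u hmem.2) (Ne.symm hmem.1)
  have hlt' : (pmax u : ℕ) < (pmax2 u : ℕ) := hlt
  refine ⟨⟨(pmax u : ℕ), by omega⟩, by simpa using hlt', ?_⟩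
  have hcs : Fin.castSucc (⟨(pmax u : ℕ), by omega⟩ : Fin (m+1)) = pmax u := by
    ext; simp
  have hsa : (pmax2 u).succAbove ⟨(pmax u : ℕ), by omega⟩ = pmax u := by
    rw [Fin.succAbove_of_castSucc_lt _ _ (by rw [hcs]; exact hlt), hcs]
  intro j
  show u ((pmax2 u).succAbove j) ≤ u ((pmax2 u).succAbove _)
  rw [hsa]
  exact pmax_spec u _

lemma not_pdisc_pmax {m n : ℕ} (u : Fin (m+2) → Fin n)
    (h0 : sortedVal (Fv u) (m+1) = sortedVal (Fv u) m) :
    ¬ Pdisc (pmax u) (Fin.removeNth (pmax u) u) := by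
  rintro ⟨i, hilt, hmax⟩
  have hne := second_max_exists u h0
  obtain ⟨x, hx⟩ := hne
  rw [Finset.mem_erase] at hx
  obtain ⟨i', hi'⟩ := Fin.exists_succAbove_eq hx.1
  have hxval : u x = u (pmax u) :=
    le_antisymm (pmax_spec u x) (maxSet_mem_iff.mp hx.2 (pmax u))
  have h5 : u (pmax u) ≤ Fin.removeNth (pmax u) u i := by
    have := hmax i'
    show u (pmax u) ≤ u ((pmax u).succAbove i)
    calc u (pmax u) = u x := hxval.symm
    _ = u ((pmax u).succAbove i') := by rw [hi']
    _ ≤ u ((pmax u).succAbove i) := this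
  have hcs : Fin.castSucc i < pmax u := by
    rw [Fin.lt_def]; simpa using hilt
  have hsa : (pmax u).succAbove i = Fin.castSucc i := Fin.succAbove_of_castSucc_lt _ _ hcs
  have hmaxcs : Fin.castSucc i ∈ maxSet u := by
    rw [maxSet_mem_iff]
    intro j
    calc u j ≤ u (pmax u) := pmax_spec u j
    _ ≤ u ((pmax u).succAbove i) := h5
    _ = u (Fin.castSucc i) := by rw [hsa]
  have := pmax_le u hmaxcs
  rw [Fin.le_def] at this
  simp at this
  omega

lemma rec_max {m n : ℕ} (u : Fin (m+2) → Fin n)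
    (h0 : sortedVal (Fv u) (m+1) = sortedVal (Fv u) m)
    {q : Fin (m+2)} (hq : q ∈ maxSet u) :
    (u q : ℕ) + 1 = sortedVal (Fv (Fin.removeNth q u)) m := by
  have h1 := sortedVal_last_max u (maxSet_mem_iff.mp hq)
  have h2 := sortedVal_rm_max u (maxSet_mem_iff.mp hq) (Nat.lt_succ_self m)
  omega

set_option maxHeartbeats 1000000 in
lemma count_tg_zero (m n : ℕ) :
    2 * ((Finset.univ : Finset (Fin (m+2) → Fin n)).filter
      (fun u => sortedVal (Fv u) (m+1) = sortedVal (Fv u) m)).card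
    ≤ (m+2) * n ^ (m+1) := by
  classical
  have hprod : 2 * ((Finset.univ : Finset (Fin (m+2) → Fin n)).filter
      (fun u => sortedVal (Fv u) (m+1) = sortedVal (Fv u) m)).card
      = (((Finset.univ : Finset (Fin (m+2) → Fin n)).filter
      (fun u => sortedVal (Fv u) (m+1) = sortedVal (Fv u) m)) ×ˢ
        (Finset.univ : Finset Bool)).card := by
    rw [Finset.card_product]
    simp [mul_comm]
  rw [hprod]
  have hcard : ((Finset.univ : Finset (Fin (m+2) × (Fin (m+1) → Fin n)))).card
      = (m+2) * n ^ (m+1) := by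
    simp [Fintype.card_fun]
  rw [← hcard]
  apply Finset.card_le_card_of_injOn
    (f := fun ub => (((if ub.2 then pmax2 ub.1 else pmax ub.1),
      Fin.removeNth (if ub.2 then pmax2 ub.1 else pmax ub.1) ub.1) :
        Fin (m+2) × (Fin (m+1) → Fin n)))
  · intro u _
    exact Finset.mem_univ _
  · rintro ⟨u, b⟩ hu ⟨v, b'⟩ hv heq
    simp only [Finset.coe_product, Set.mem_prod, Finset.mem_coe, Finset.mem_filter,
      Finset.mem_univ, true_and] at hu hv
    obtain ⟨hu, -⟩ := hu
    obtain ⟨hv, -⟩ := hv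
    simp only [Prod.ext_iff] at heq
    obtain ⟨hq, hr⟩ := heq
    -- the chosen position is a maximum position in both cases
    have humem : (if b then pmax2 u else pmax u) ∈ maxSet u := by
      cases b
      · simpa [pmax] using (maxSet u).min'_mem (maxSet_nonempty u)
      · simpa using (Finset.mem_erase.mp (pmax2_spec u (second_max_exists u hu))).2
    have hvmem : (if b' then pmax2 v else pmax v) ∈ maxSet v := by
      cases b'
      · simpa [pmax] using (maxSet v).min'_mem (maxSet_nonempty v)
      · simpa using (Finset.mem_erase.mp (pmax2_spec v (second_max_exists v hv))).2
    -- booleans agree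
    have hb : b = b' := by
      cases b <;> cases b' <;> first | rfl | skip
      · exfalso
        simp only [Bool.false_eq_true, if_false, if_true] at hq hr
        apply not_pdisc_pmax u hu
        rw [hr, hq]
        exact pdisc_pmax2 v hv
      · exfalso
        simp only [Bool.false_eq_true, if_false, if_true] at hq hr
        apply not_pdisc_pmax v hv
        rw [← hr, ← hq]
        exact pdisc_pmax2 u hu
    cases hb
    have e1 := rec_max u hu humem
    have e2 := rec_max v hv hvmem
    rw [hr, hq] at e1
    have huv : u (if b then pmax2 v else pmax v) = v (if b then pmax2 v else pmax v) :=
      Fin.val_injective (by omega)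
    rw [hq] at hr
    have h1 := Fin.insertNth_self_removeNth (if b then pmax2 v else pmax v) u
    have h2 := Fin.insertNth_self_removeNth (if b then pmax2 v else pmax v) v
    have huveq : u = v := by
      conv_lhs => rw [← h1]
      rw [huv, hr, h2]
    rw [huveq]

set_option maxHeartbeats 1000000 in
/-- Count of tuples whose bottom gap is between 1 and l. -/
lemma count_bg_between (m n l : ℕ) (hl : 1 ≤ l) :
    ((Finset.univ : Finset (Fin (m+2) → Fin n)).filter
      (fun u => 1 ≤ sortedVal (Fv u) 1 - sortedVal (Fv u) 0 ∧
        sortedVal (Fv u) 1 - sortedVal (Fv u) 0 ≤ l)).card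
    ≤ (m+2) * (l * n ^ (m+1)) := by
  classical
  have key : ∀ u : Fin (m+2) → Fin n,
      (u (pmin u) : ℕ) + 1 + (sortedVal (Fv u) 1 - sortedVal (Fv u) 0)
        = sortedVal (Fv (Fin.removeNth (pmin u) u)) 0 := by
    intro u
    have h1 : sortedVal (Fv u) 0 = (u (pmin u) : ℕ) + 1 := sortedVal_zero_min u (pmin_spec u)
    have h2 : sortedVal (Fv u) 1 = sortedVal (Fv (Fin.removeNth (pmin u) u)) 0 := by
      have := sortedVal_rm_min u (pmin_spec u) 0
      norm_num at this
      exact this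
    have h3 : sortedVal (Fv u) 0 ≤ sortedVal (Fv u) 1 :=
      sortedVal_mono (Fv u) (by omega) (by omega)
    omega
  have hcard : ((Finset.univ : Finset (Fin (m+2) × Fin l × (Fin (m+1) → Fin n)))).card
      = (m+2) * (l * n ^ (m+1)) := by
    simp [Fintype.card_fun]
  rw [← hcard]
  apply Finset.card_le_card_of_injOn
    (f := fun u => ((pmin u, ⟨(sortedVal (Fv u) 1 - sortedVal (Fv u) 0 - 1) % l,
      Nat.mod_lt _ hl⟩,
      Fin.removeNth (pmin u) u) : Fin (m+2) × Fin l × (Fin (m+1) → Fin n)))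
  · intro u _
    exact Finset.mem_univ _
  · intro u hu v hv heq
    simp only [Finset.coe_filter, Set.mem_setOf_eq, Finset.mem_univ, true_and] at hu hv
    obtain ⟨hq, hb, hr⟩ : pmin u = pmin v ∧
        ((sortedVal (Fv u) 1 - sortedVal (Fv u) 0 - 1) % l : ℕ)
          = ((sortedVal (Fv v) 1 - sortedVal (Fv v) 0 - 1) % l : ℕ) ∧
        Fin.removeNth (pmin u) u = Fin.removeNth (pmin v) v := by
      rw [Prod.ext_iff, Prod.ext_iff] at heq
      exact ⟨heq.1, Fin.val_eq_of_eq heq.2.1, heq.2.2⟩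
    rw [Nat.mod_eq_of_lt (by omega), Nat.mod_eq_of_lt (by omega)] at hb
    have hval : u (pmin v) = v (pmin v) := by
      have k1 := key u
      have k2 := key v
      rw [hr, hq] at k1
      exact Fin.val_injective (by omega)
    rw [hq] at hr
    have h1 := Fin.insertNth_self_removeNth (pmin v) u
    have h2 := Fin.insertNth_self_removeNth (pmin v) v
    conv_lhs => rw [← h1]
    rw [hval, hr, h2]

lemma second_min_exists {m n : ℕ} (u : Fin (m+2) → Fin n)
    (h0 : sortedVal (Fv u) 1 = sortedVal (Fv u) 0) :
    ((minSet u).erase (pmin u)).Nonempty := by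
  have h1 : sortedVal (Fv u) 0 = (u (pmin u) : ℕ) + 1 := sortedVal_zero_min u (pmin_spec u)
  have h2 : sortedVal (Fv u) 1 = sortedVal (Fv (Fin.removeNth (pmin u) u)) 0 := by
    have := sortedVal_rm_min u (pmin_spec u) 0
    norm_num at this
    exact this
  obtain ⟨i, hi⟩ := sortedVal_mem (Fv (Fin.removeNth (pmin u) u)) (Nat.succ_pos m)
  have hvali : u ((pmin u).succAbove i) = u (pmin u) := by
    apply Fin.val_injective
    have e1 : (u ((pmin u).succAbove i) : ℕ) + 1
        = sortedVal (Fv (Fin.removeNth (pmin u) u)) 0 := by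
      rw [← hi]; rfl
    omega
  refine ⟨(pmin u).succAbove i, Finset.mem_erase.mpr ⟨Fin.succAbove_ne _ _, ?_⟩⟩
  rw [minSet_mem_iff, hvali]
  exact pmin_spec u

/-- discriminating predicate: some minimum of `r` occurs before position `q`. -/
def Pdisc' {M n : ℕ} (q : Fin (M+1)) (r : Fin M → Fin n) : Prop :=
  ∃ i : Fin M, ((i : ℕ) < (q : ℕ)) ∧ ∀ j, r i ≤ r j

lemma pdisc'_pmin2 {m n : ℕ} (u : Fin (m+2) → Fin n)
    (h0 : sortedVal (Fv u) 1 = sortedVal (Fv u) 0) :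
    Pdisc' (pmin2 u) (Fin.removeNth (pmin2 u) u) := by
  have hne := second_min_exists u h0
  have hmem := pmin2_spec u hne
  rw [Finset.mem_erase] at hmem
  have hlt : pmin u < pmin2 u := lt_of_le_of_ne (pmin_le u hmem.2) (Ne.symm hmem.1)
  have hlt' : (pmin u : ℕ) < (pmin2 u : ℕ) := hlt
  refine ⟨⟨(pmin u : ℕ), by omega⟩, by simpa using hlt', ?_⟩
  have hcs : Fin.castSucc (⟨(pmin u : ℕ), by omega⟩ : Fin (m+1)) = pmin u := by
    ext; simp
  have hsa : (pmin2 u).succAbove ⟨(pmin u : ℕ), by omega⟩ = pmin u := by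
    rw [Fin.succAbove_of_castSucc_lt _ _ (by rw [hcs]; exact hlt), hcs]
  intro j
  show u ((pmin2 u).succAbove _) ≤ u ((pmin2 u).succAbove j)
  rw [hsa]
  exact pmin_spec u _

lemma not_pdisc'_pmin {m n : ℕ} (u : Fin (m+2) → Fin n)
    (h0 : sortedVal (Fv u) 1 = sortedVal (Fv u) 0) :
    ¬ Pdisc' (pmin u) (Fin.removeNth (pmin u) u) := by
  rintro ⟨i, hilt, hmin⟩
  have hne := second_min_exists u h0
  obtain ⟨x, hx⟩ := hne
  rw [Finset.mem_erase] at hx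
  obtain ⟨i', hi'⟩ := Fin.exists_succAbove_eq hx.1
  have hxval : u x = u (pmin u) :=
    le_antisymm (minSet_mem_iff.mp hx.2 (pmin u)) (pmin_spec u x)
  have h5 : Fin.removeNth (pmin u) u i ≤ u (pmin u) := by
    have := hmin i'
    show u ((pmin u).succAbove i) ≤ u (pmin u)
    calc u ((pmin u).succAbove i) ≤ u ((pmin u).succAbove i') := this
    _ = u x := by rw [hi']
    _ = u (pmin u) := hxval
  have hcs : Fin.castSucc i < pmin u := by
    rw [Fin.lt_def]; simpa using hilt
  have hsa : (pmin u).succAbove i = Fin.castSucc i := Fin.succAbove_of_castSucc_lt _ _ hcs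
  have hmincs : Fin.castSucc i ∈ minSet u := by
    rw [minSet_mem_iff]
    intro j
    calc u (Fin.castSucc i) = u ((pmin u).succAbove i) := by rw [hsa]
    _ ≤ u (pmin u) := h5
    _ ≤ u j := pmin_spec u j
  have := pmin_le u hmincs
  rw [Fin.le_def] at this
  simp at this
  omega

lemma rec_min {m n : ℕ} (u : Fin (m+2) → Fin n)
    (h0 : sortedVal (Fv u) 1 = sortedVal (Fv u) 0)
    {q : Fin (m+2)} (hq : q ∈ minSet u) :
    (u q : ℕ) + 1 = sortedVal (Fv (Fin.removeNth q u)) 0 := by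
  have h1 := sortedVal_zero_min u (minSet_mem_iff.mp hq)
  have h2 := sortedVal_rm_min u (minSet_mem_iff.mp hq) 0
  norm_num at h2
  omega

set_option maxHeartbeats 1000000 in
lemma count_bg_zero (m n : ℕ) :
    2 * ((Finset.univ : Finset (Fin (m+2) → Fin n)).filter
      (fun u => sortedVal (Fv u) 1 = sortedVal (Fv u) 0)).card
    ≤ (m+2) * n ^ (m+1) := by
  classical
  have hprod : 2 * ((Finset.univ : Finset (Fin (m+2) → Fin n)).filter
      (fun u => sortedVal (Fv u) 1 = sortedVal (Fv u) 0)).card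
      = (((Finset.univ : Finset (Fin (m+2) → Fin n)).filter
      (fun u => sortedVal (Fv u) 1 = sortedVal (Fv u) 0)) ×ˢ
        (Finset.univ : Finset Bool)).card := by
    rw [Finset.card_product]
    simp [mul_comm]
  rw [hprod]
  have hcard : ((Finset.univ : Finset (Fin (m+2) × (Fin (m+1) → Fin n)))).card
      = (m+2) * n ^ (m+1) := by
    simp [Fintype.card_fun]
  rw [← hcard]
  apply Finset.card_le_card_of_injOn
    (f := fun ub => (((if ub.2 then pmin2 ub.1 else pmin ub.1),
      Fin.removeNth (if ub.2 then pmin2 ub.1 else pmin ub.1) ub.1) :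
        Fin (m+2) × (Fin (m+1) → Fin n)))
  · intro u _
    exact Finset.mem_univ _
  · rintro ⟨u, b⟩ hu ⟨v, b'⟩ hv heq
    simp only [Finset.coe_product, Set.mem_prod, Finset.mem_coe, Finset.mem_filter,
      Finset.mem_univ, true_and] at hu hv
    obtain ⟨hu, -⟩ := hu
    obtain ⟨hv, -⟩ := hv
    simp only [Prod.ext_iff] at heq
    obtain ⟨hq, hr⟩ := heq
    have humem : (if b then pmin2 u else pmin u) ∈ minSet u := by
      cases b
      · simpa [pmin] using (minSet u).min'_mem (minSet_nonempty u)
      · simpa using (Finset.mem_erase.mp (pmin2_spec u (second_min_exists u hu))).2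
    have hvmem : (if b' then pmin2 v else pmin v) ∈ minSet v := by
      cases b'
      · simpa [pmin] using (minSet v).min'_mem (minSet_nonempty v)
      · simpa using (Finset.mem_erase.mp (pmin2_spec v (second_min_exists v hv))).2
    have hb : b = b' := by
      cases b <;> cases b' <;> first | rfl | skip
      · exfalso
        simp only [Bool.false_eq_true, if_false, if_true] at hq hr
        apply not_pdisc'_pmin u hu
        rw [hr, hq]
        exact pdisc'_pmin2 v hv
      · exfalso
        simp only [Bool.false_eq_true, if_false, if_true] at hq hr
        apply not_pdisc'_pmin v hv
        rw [← hr, ← hq]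
        exact pdisc'_pmin2 u hu
    cases hb
    have e1 := rec_min u hu humem
    have e2 := rec_min v hv hvmem
    rw [hr, hq] at e1
    have huv : u (if b then pmin2 v else pmin v) = v (if b then pmin2 v else pmin v) :=
      Fin.val_injective (by omega)
    rw [hq] at hr
    have h1 := Fin.insertNth_self_removeNth (if b then pmin2 v else pmin v) u
    have h2 := Fin.insertNth_self_removeNth (if b then pmin2 v else pmin v) v
    have huveq : u = v := by
      conv_lhs => rw [← h1]
      rw [huv, hr, h2]
    rw [huveq]

/-- split bound: tuples with top gap ≤ L -/
lemma count_tg_le (m n L : ℕ) :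
    2 * ((Finset.univ : Finset (Fin (m+2) → Fin n)).filter
      (fun u => sortedVal (Fv u) (m+1) - sortedVal (Fv u) m ≤ L)).card
    ≤ (m+2) * ((2*L+1) * n ^ (m+1)) := by
  classical
  have hsub : ((Finset.univ : Finset (Fin (m+2) → Fin n)).filter
      (fun u => sortedVal (Fv u) (m+1) - sortedVal (Fv u) m ≤ L))
      ⊆ ((Finset.univ : Finset (Fin (m+2) → Fin n)).filter
        (fun u => sortedVal (Fv u) (m+1) = sortedVal (Fv u) m))
      ∪ ((Finset.univ : Finset (Fin (m+2) → Fin n)).filter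
        (fun u => 1 ≤ sortedVal (Fv u) (m+1) - sortedVal (Fv u) m ∧
          sortedVal (Fv u) (m+1) - sortedVal (Fv u) m ≤ L)) := by
    intro u hu
    rw [Finset.mem_filter] at hu
    have hmono : sortedVal (Fv u) m ≤ sortedVal (Fv u) (m+1) :=
      sortedVal_mono (Fv u) (Nat.le_succ m) (by omega)
    rw [Finset.mem_union, Finset.mem_filter, Finset.mem_filter]
    rcases Nat.eq_zero_or_pos (sortedVal (Fv u) (m+1) - sortedVal (Fv u) m) with h | h
    · exact Or.inl ⟨Finset.mem_univ _, by omega⟩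
    · exact Or.inr ⟨Finset.mem_univ _, h, hu.2⟩
  have h1 := Finset.card_le_card hsub
  have h2 := Finset.card_union_le
    ((Finset.univ : Finset (Fin (m+2) → Fin n)).filter
        (fun u => sortedVal (Fv u) (m+1) = sortedVal (Fv u) m))
    ((Finset.univ : Finset (Fin (m+2) → Fin n)).filter
        (fun u => 1 ≤ sortedVal (Fv u) (m+1) - sortedVal (Fv u) m ∧
          sortedVal (Fv u) (m+1) - sortedVal (Fv u) m ≤ L))
  have h3 := count_tg_zero m n
  rcases Nat.eq_zero_or_pos L with rfl | hL
  · -- L = 0 : the "between" filter is empty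
    have h4 : ((Finset.univ : Finset (Fin (m+2) → Fin n)).filter
        (fun u => 1 ≤ sortedVal (Fv u) (m+1) - sortedVal (Fv u) m ∧
          sortedVal (Fv u) (m+1) - sortedVal (Fv u) m ≤ 0)).card = 0 := by
      rw [Finset.card_eq_zero, Finset.filter_eq_empty_iff]
      intro u _
      omega
    have goal2 : (m+2) * ((2*0+1) * n ^ (m+1)) = (m+2) * n ^ (m+1) := by ring
    rw [goal2]
    omega
  · have h4 := count_tg_between m n L hL
    have : (m+2) * ((2*L+1) * n ^ (m+1))
        = (m+2) * n ^ (m+1) + 2 * ((m+2) * (L * n ^ (m+1))) := by ring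
    omega

/-- split bound: tuples with bottom gap ≤ L -/
lemma count_bg_le (m n L : ℕ) :
    2 * ((Finset.univ : Finset (Fin (m+2) → Fin n)).filter
      (fun u => sortedVal (Fv u) 1 - sortedVal (Fv u) 0 ≤ L)).card
    ≤ (m+2) * ((2*L+1) * n ^ (m+1)) := by
  classical
  have hsub : ((Finset.univ : Finset (Fin (m+2) → Fin n)).filter
      (fun u => sortedVal (Fv u) 1 - sortedVal (Fv u) 0 ≤ L))
      ⊆ ((Finset.univ : Finset (Fin (m+2) → Fin n)).filter
        (fun u => sortedVal (Fv u) 1 = sortedVal (Fv u) 0))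
      ∪ ((Finset.univ : Finset (Fin (m+2) → Fin n)).filter
        (fun u => 1 ≤ sortedVal (Fv u) 1 - sortedVal (Fv u) 0 ∧
          sortedVal (Fv u) 1 - sortedVal (Fv u) 0 ≤ L)) := by
    intro u hu
    rw [Finset.mem_filter] at hu
    have hmono : sortedVal (Fv u) 0 ≤ sortedVal (Fv u) 1 :=
      sortedVal_mono (Fv u) (by omega) (by omega)
    rw [Finset.mem_union, Finset.mem_filter, Finset.mem_filter]
    rcases Nat.eq_zero_or_pos (sortedVal (Fv u) 1 - sortedVal (Fv u) 0) with h | h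
    · exact Or.inl ⟨Finset.mem_univ _, by omega⟩
    · exact Or.inr ⟨Finset.mem_univ _, h, hu.2⟩
  have h1 := Finset.card_le_card hsub
  have h2 := Finset.card_union_le
    ((Finset.univ : Finset (Fin (m+2) → Fin n)).filter
        (fun u => sortedVal (Fv u) 1 = sortedVal (Fv u) 0))
    ((Finset.univ : Finset (Fin (m+2) → Fin n)).filter
        (fun u => 1 ≤ sortedVal (Fv u) 1 - sortedVal (Fv u) 0 ∧
          sortedVal (Fv u) 1 - sortedVal (Fv u) 0 ≤ L))
  have h3 := count_bg_zero m n
  rcases Nat.eq_zero_or_pos L with rfl | hL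
  · have h4 : ((Finset.univ : Finset (Fin (m+2) → Fin n)).filter
        (fun u => 1 ≤ sortedVal (Fv u) 1 - sortedVal (Fv u) 0 ∧
          sortedVal (Fv u) 1 - sortedVal (Fv u) 0 ≤ 0)).card = 0 := by
      rw [Finset.card_eq_zero, Finset.filter_eq_empty_iff]
      intro u _
      omega
    have goal2 : (m+2) * ((2*0+1) * n ^ (m+1)) = (m+2) * n ^ (m+1) := by ring
    rw [goal2]
    omega
  · have h4 := count_bg_between m n L hL
    have : (m+2) * ((2*L+1) * n ^ (m+1))
        = (m+2) * n ^ (m+1) + 2 * ((m+2) * (L * n ^ (m+1))) := by ring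
    omega

set_option maxHeartbeats 1000000 in
/-- Case A: bottom gap equals l (≥1), top gap at most l. -/
lemma caseA (m n l : ℕ) :
    ((Finset.univ : Finset (Fin (m+4) → Fin n)).filter
      (fun t => sortedVal (Fv t) 1 - sortedVal (Fv t) 0 = l ∧ 1 ≤ l ∧
        sortedVal (Fv t) (m+3) - sortedVal (Fv t) (m+2) ≤ l)).card
    ≤ (m+4) * ((Finset.univ : Finset (Fin (m+3) → Fin n)).filter
      (fun u => sortedVal (Fv u) (m+2) - sortedVal (Fv u) (m+1) ≤ l)).card := by
  classical
  have key : ∀ t : Fin (m+4) → Fin n,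
      (t (pmin t) : ℕ) + 1 + (sortedVal (Fv t) 1 - sortedVal (Fv t) 0)
        = sortedVal (Fv (Fin.removeNth (pmin t) t)) 0 := by
    intro t
    have h1 : sortedVal (Fv t) 0 = (t (pmin t) : ℕ) + 1 := sortedVal_zero_min t (pmin_spec t)
    have h2 : sortedVal (Fv t) 1 = sortedVal (Fv (Fin.removeNth (pmin t) t)) 0 := by
      have := sortedVal_rm_min t (pmin_spec t) 0
      norm_num at this
      exact this
    have h3 : sortedVal (Fv t) 0 ≤ sortedVal (Fv t) 1 :=
      sortedVal_mono (Fv t) (by omega) (by omega)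
    omega
  have hcard : ((Finset.univ : Finset (Fin (m+4))) ×ˢ
      ((Finset.univ : Finset (Fin (m+3) → Fin n)).filter
        (fun u => sortedVal (Fv u) (m+2) - sortedVal (Fv u) (m+1) ≤ l))).card
      = (m+4) * ((Finset.univ : Finset (Fin (m+3) → Fin n)).filter
        (fun u => sortedVal (Fv u) (m+2) - sortedVal (Fv u) (m+1) ≤ l)).card := by
    rw [Finset.card_product]
    simp
  rw [← hcard]
  apply Finset.card_le_card_of_injOn
    (f := fun t => ((pmin t, Fin.removeNth (pmin t) t) :
      Fin (m+4) × (Fin (m+3) → Fin n)))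
  · intro t ht
    rw [Finset.mem_coe, Finset.mem_filter] at ht
    obtain ⟨-, hbot, -, htop⟩ := ht
    rw [Finset.mem_coe, Finset.mem_product, Finset.mem_filter]
    refine ⟨Finset.mem_univ _, Finset.mem_univ _, ?_⟩
    show sortedVal (Fv (Fin.removeNth (pmin t) t)) (m+2)
      - sortedVal (Fv (Fin.removeNth (pmin t) t)) (m+1) ≤ l
    have a1 : sortedVal (Fv t) (m+3) = sortedVal (Fv (Fin.removeNth (pmin t) t)) (m+2) :=
      sortedVal_rm_min t (pmin_spec t) (m+2)
    have a2 : sortedVal (Fv t) (m+2) = sortedVal (Fv (Fin.removeNth (pmin t) t)) (m+1) :=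
      sortedVal_rm_min t (pmin_spec t) (m+1)
    omega
  · intro t ht s hs heq
    simp only [Finset.coe_filter, Set.mem_setOf_eq, Finset.mem_univ, true_and] at ht hs
    simp only [Prod.ext_iff] at heq
    obtain ⟨hq, hr⟩ := heq
    have k1 := key t
    have k2 := key s
    rw [hr, hq] at k1
    rw [ht.1] at k1
    rw [hs.1] at k2
    have hval : t (pmin s) = s (pmin s) := Fin.val_injective (by omega)
    rw [hq] at hr
    have h1 := Fin.insertNth_self_removeNth (pmin s) t
    have h2 := Fin.insertNth_self_removeNth (pmin s) s
    conv_lhs => rw [← h1]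
    rw [hval, hr, h2]

set_option maxHeartbeats 1000000 in
/-- Case B: top gap equals l (≥1), bottom gap < l. -/
lemma caseB (m n l : ℕ) :
    ((Finset.univ : Finset (Fin (m+4) → Fin n)).filter
      (fun t => sortedVal (Fv t) (m+3) - sortedVal (Fv t) (m+2) = l ∧ 1 ≤ l ∧
        sortedVal (Fv t) 1 - sortedVal (Fv t) 0 ≤ l - 1)).card
    ≤ (m+4) * ((Finset.univ : Finset (Fin (m+3) → Fin n)).filter
      (fun u => sortedVal (Fv u) 1 - sortedVal (Fv u) 0 ≤ l - 1)).card := by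
  classical
  have key : ∀ t : Fin (m+4) → Fin n,
      (t (pmax t) : ℕ) + 1
        = sortedVal (Fv (Fin.removeNth (pmax t) t)) (m+2)
          + (sortedVal (Fv t) (m+3) - sortedVal (Fv t) (m+2)) := by
    intro t
    have h1 : sortedVal (Fv t) (m+3) = (t (pmax t) : ℕ) + 1 := sortedVal_last_max t (pmax_spec t)
    have h2 : sortedVal (Fv t) (m+2) = sortedVal (Fv (Fin.removeNth (pmax t) t)) (m+2) :=
      sortedVal_rm_max t (pmax_spec t) (by omega)
    have h3 : sortedVal (Fv t) (m+2) ≤ sortedVal (Fv t) (m+3) :=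
      sortedVal_mono (Fv t) (by omega) (by omega)
    omega
  have hcard : ((Finset.univ : Finset (Fin (m+4))) ×ˢ
      ((Finset.univ : Finset (Fin (m+3) → Fin n)).filter
        (fun u => sortedVal (Fv u) 1 - sortedVal (Fv u) 0 ≤ l - 1))).card
      = (m+4) * ((Finset.univ : Finset (Fin (m+3) → Fin n)).filter
        (fun u => sortedVal (Fv u) 1 - sortedVal (Fv u) 0 ≤ l - 1)).card := by
    rw [Finset.card_product]
    simp
  rw [← hcard]
  apply Finset.card_le_card_of_injOn
    (f := fun t => ((pmax t, Fin.removeNth (pmax t) t) :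
      Fin (m+4) × (Fin (m+3) → Fin n)))
  · intro t ht
    rw [Finset.mem_coe, Finset.mem_filter] at ht
    obtain ⟨-, htop, -, hbot⟩ := ht
    rw [Finset.mem_coe, Finset.mem_product, Finset.mem_filter]
    refine ⟨Finset.mem_univ _, Finset.mem_univ _, ?_⟩
    show sortedVal (Fv (Fin.removeNth (pmax t) t)) 1
      - sortedVal (Fv (Fin.removeNth (pmax t) t)) 0 ≤ l - 1
    have a1 : sortedVal (Fv t) 1 = sortedVal (Fv (Fin.removeNth (pmax t) t)) 1 :=
      sortedVal_rm_max t (pmax_spec t) (by omega)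
    have a2 : sortedVal (Fv t) 0 = sortedVal (Fv (Fin.removeNth (pmax t) t)) 0 :=
      sortedVal_rm_max t (pmax_spec t) (by omega)
    omega
  · intro t ht s hs heq
    simp only [Finset.coe_filter, Set.mem_setOf_eq, Finset.mem_univ, true_and] at ht hs
    simp only [Prod.ext_iff] at heq
    obtain ⟨hq, hr⟩ := heq
    have k1 := key t
    have k2 := key s
    rw [hr, hq] at k1
    rw [ht.1] at k1
    rw [hs.1] at k2
    have hval : t (pmax s) = s (pmax s) := Fin.val_injective (by omega)
    rw [hq] at hr
    have h1 := Fin.insertNth_self_removeNth (pmax s) t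
    have h2 := Fin.insertNth_self_removeNth (pmax s) s
    conv_lhs => rw [← h1]
    rw [hval, hr, h2]

lemma pmax_mem {M n : ℕ} [NeZero M] (u : Fin M → Fin n) : pmax u ∈ maxSet u :=
  Finset.min'_mem _ _

lemma pmin_mem {M n : ℕ} [NeZero M] (u : Fin M → Fin n) : pmin u ∈ minSet u :=
  Finset.min'_mem _ _

set_option maxHeartbeats 1000000 in
set_option synthInstance.maxHeartbeats 400000 in
/-- Case l = 0 : both gaps vanish. -/
lemma caseZero (m n : ℕ) :
    ((Finset.univ : Finset (Fin (m+4) → Fin n)).filter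
      (fun t => sortedVal (Fv t) 1 = sortedVal (Fv t) 0 ∧
        sortedVal (Fv t) (m+3) = sortedVal (Fv t) (m+2))).card
    ≤ (m+4) * ((m+3) * n ^ (m+2)) := by
  classical
  have hcard : ((Finset.univ : Finset (Fin (m+4) × Fin (m+3) × (Fin (m+2) → Fin n)))).card
      = (m+4) * ((m+3) * n ^ (m+2)) := by
    simp [Fintype.card_fun]
  rw [← hcard]
  apply Finset.card_le_card_of_injOn
    (f := fun t => ((pmax t, pmin (Fin.removeNth (pmax t) t),
      Fin.removeNth (pmin (Fin.removeNth (pmax t) t)) (Fin.removeNth (pmax t) t)) :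
        Fin (m+4) × Fin (m+3) × (Fin (m+2) → Fin n)))
  · intro t _
    exact Finset.mem_univ _
  · intro t ht s hs heq
    simp only [Finset.coe_filter, Set.mem_setOf_eq, Finset.mem_univ, true_and] at ht hs
    simp only [Prod.ext_iff] at heq
    obtain ⟨hq, hp, hr⟩ := heq
    -- bottom equality descends to the removed tuple
    have hb_t : sortedVal (Fv (Fin.removeNth (pmax t) t)) 1
        = sortedVal (Fv (Fin.removeNth (pmax t) t)) 0 := by
      have a1 : sortedVal (Fv t) 1 = sortedVal (Fv (Fin.removeNth (pmax t) t)) 1 :=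
        sortedVal_rm_max t (pmax_spec t) (by omega)
      have a2 : sortedVal (Fv t) 0 = sortedVal (Fv (Fin.removeNth (pmax t) t)) 0 :=
        sortedVal_rm_max t (pmax_spec t) (by omega)
      omega
    have hb_s : sortedVal (Fv (Fin.removeNth (pmax s) s)) 1
        = sortedVal (Fv (Fin.removeNth (pmax s) s)) 0 := by
      have a1 : sortedVal (Fv s) 1 = sortedVal (Fv (Fin.removeNth (pmax s) s)) 1 :=
        sortedVal_rm_max s (pmax_spec s) (by omega)
      have a2 : sortedVal (Fv s) 0 = sortedVal (Fv (Fin.removeNth (pmax s) s)) 0 :=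
        sortedVal_rm_max s (pmax_spec s) (by omega)
      omega
    have kt : (t (pmax t) : ℕ) + 1
        = sortedVal (Fv (Fin.removeNth (pmax t) t)) (m+2) := rec_max t ht.2 (pmax_mem t)
    have ks : (s (pmax s) : ℕ) + 1
        = sortedVal (Fv (Fin.removeNth (pmax s) s)) (m+2) := rec_max s hs.2 (pmax_mem s)
    have k1 := rec_min (Fin.removeNth (pmax t) t) hb_t (pmin_mem _)
    have k2 := rec_min (Fin.removeNth (pmax s) s) hb_s (pmin_mem _)
    rw [hq] at kt k1 hp hr
    rw [hp] at k1 hr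
    rw [hr] at k1
    have hval : (Fin.removeNth (pmax s) t) (pmin (Fin.removeNth (pmax s) s))
        = (Fin.removeNth (pmax s) s) (pmin (Fin.removeNth (pmax s) s)) :=
      Fin.val_injective (by omega)
    have huu : Fin.removeNth (pmax s) t = Fin.removeNth (pmax s) s := by
      conv_lhs => rw [← Fin.insertNth_self_removeNth (pmin (Fin.removeNth (pmax s) s))
        (Fin.removeNth (pmax s) t)]
      rw [hval, hr, Fin.insertNth_self_removeNth]
    rw [huu] at kt
    have tval : t (pmax s) = s (pmax s) := Fin.val_injective (by omega)
    conv_lhs => rw [← Fin.insertNth_self_removeNth (pmax s) t]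
    rw [tval, huu, Fin.insertNth_self_removeNth]

end S5

set_option maxHeartbeats 1000000 in
/-- The number of `2k`-tuples of indices in `{1,...,n}` with
`max{i₍₂₎ - i₍₁₎, i₍₂ₖ₎ - i₍₂ₖ₋₁₎} = l` is at most `(2k)! · l · n^(2k-2)` for `l ≥ 1`,
and at most `(2k)! · n^(2k-2)` for `l = 0`. -/
theorem stmt5 (n k l : ℕ) (hk : 2 ≤ k) :
    (1 ≤ l →
      ((Finset.univ : Finset (Fin (2 * k) → Fin n)).filter
          (fun t => maxGap (fun j => (t j : ℕ) + 1) = l)).card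
        ≤ Nat.factorial (2 * k) * l * n ^ (2 * k - 2)) ∧
    (l = 0 →
      ((Finset.univ : Finset (Fin (2 * k) → Fin n)).filter
          (fun t => maxGap (fun j => (t j : ℕ) + 1) = l)).card
        ≤ Nat.factorial (2 * k) * n ^ (2 * k - 2)) := by
  classical
  obtain ⟨m, hm⟩ : ∃ m, 2 * k = m + 4 := ⟨2 * k - 4, by omega⟩
  rw [hm]
  have hpred : ∀ t : Fin (m+4) → Fin n, maxGap (fun j => (t j : ℕ) + 1)
      = max (sortedVal (S5.Fv t) 1 - sortedVal (S5.Fv t) 0)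
          (sortedVal (S5.Fv t) (m+3) - sortedVal (S5.Fv t) (m+2)) := fun t => rfl
  have hexp : m + 4 - 2 = m + 2 := rfl
  rw [hexp]
  have hfact2 : 2 ≤ Nat.factorial (m+2) := by
    calc 2 = Nat.factorial 2 := rfl
    _ ≤ Nat.factorial (m+2) := Nat.factorial_le (by omega)
  have hfactsplit : Nat.factorial (m+4) = (m+4) * ((m+3) * Nat.factorial (m+2)) := by
    rw [show m+4 = (m+3)+1 from rfl, Nat.factorial_succ, show m+3 = (m+2)+1 from rfl,
      Nat.factorial_succ]
  have hfact : 2 * ((m+4)*(m+3)) ≤ Nat.factorial (m+4) := by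
    rw [hfactsplit]
    calc 2 * ((m+4)*(m+3)) = (m+4) * ((m+3) * 2) := by ring
    _ ≤ (m+4) * ((m+3) * Nat.factorial (m+2)) := by
        exact Nat.mul_le_mul_left _ (Nat.mul_le_mul_left _ hfact2)
  constructor
  · -- l ≥ 1
    intro hl
    obtain ⟨l', rfl⟩ : ∃ l', l = l' + 1 := ⟨l - 1, by omega⟩
    have hsub : ((Finset.univ : Finset (Fin (m+4) → Fin n)).filter
        (fun t => maxGap (fun j => (t j : ℕ) + 1) = l'+1))
        ⊆ ((Finset.univ : Finset (Fin (m+4) → Fin n)).filter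
            (fun t => sortedVal (S5.Fv t) 1 - sortedVal (S5.Fv t) 0 = l'+1 ∧ 1 ≤ l'+1 ∧
              sortedVal (S5.Fv t) (m+3) - sortedVal (S5.Fv t) (m+2) ≤ l'+1))
          ∪ ((Finset.univ : Finset (Fin (m+4) → Fin n)).filter
            (fun t => sortedVal (S5.Fv t) (m+3) - sortedVal (S5.Fv t) (m+2) = l'+1 ∧
              1 ≤ l'+1 ∧
              sortedVal (S5.Fv t) 1 - sortedVal (S5.Fv t) 0 ≤ l'+1 - 1)) := by
      intro t ht
      rw [Finset.mem_filter, hpred t] at ht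
      rw [Finset.mem_union, Finset.mem_filter, Finset.mem_filter]
      have hmax := ht.2
      by_cases hA : sortedVal (S5.Fv t) 1 - sortedVal (S5.Fv t) 0 = l'+1
      · exact Or.inl ⟨Finset.mem_univ _, hA, by omega, by omega⟩
      · exact Or.inr ⟨Finset.mem_univ _, by omega, by omega, by omega⟩
    have h1 := Finset.card_le_card hsub
    have h2 := Finset.card_union_le
      ((Finset.univ : Finset (Fin (m+4) → Fin n)).filter
            (fun t => sortedVal (S5.Fv t) 1 - sortedVal (S5.Fv t) 0 = l'+1 ∧ 1 ≤ l'+1 ∧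
              sortedVal (S5.Fv t) (m+3) - sortedVal (S5.Fv t) (m+2) ≤ l'+1))
      ((Finset.univ : Finset (Fin (m+4) → Fin n)).filter
            (fun t => sortedVal (S5.Fv t) (m+3) - sortedVal (S5.Fv t) (m+2) = l'+1 ∧
              1 ≤ l'+1 ∧
              sortedVal (S5.Fv t) 1 - sortedVal (S5.Fv t) 0 ≤ l'+1 - 1))
    have hA := S5.caseA m n (l'+1)
    have hB := S5.caseB m n (l'+1)
    have hUA : 2 * ((Finset.univ : Finset (Fin (m+3) → Fin n)).filter
        (fun u => sortedVal (S5.Fv u) (m+2) - sortedVal (S5.Fv u) (m+1) ≤ l'+1)).card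
        ≤ (m+3) * ((2*(l'+1)+1) * n ^ (m+2)) := S5.count_tg_le (m+1) n (l'+1)
    have hUB : 2 * ((Finset.univ : Finset (Fin (m+3) → Fin n)).filter
        (fun u => sortedVal (S5.Fv u) 1 - sortedVal (S5.Fv u) 0 ≤ l'+1 - 1)).card
        ≤ (m+3) * ((2*l'+1) * n ^ (m+2)) := S5.count_bg_le (m+1) n l'
    -- combine
    have e1 : (m+4) * ((m+3) * ((2*(l'+1)+1) * n ^ (m+2)))
        + (m+4) * ((m+3) * ((2*l'+1) * n ^ (m+2)))
        = 2 * ((2 * ((m+4)*(m+3))) * ((l'+1) * n ^ (m+2))) := by ring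
    have e2 : (2 * ((m+4)*(m+3))) * ((l'+1) * n ^ (m+2))
        ≤ Nat.factorial (m+4) * ((l'+1) * n ^ (m+2)) :=
      Nat.mul_le_mul_right _ hfact
    have e3 : Nat.factorial (m+4) * ((l'+1) * n ^ (m+2))
        = Nat.factorial (m+4) * (l'+1) * n ^ (m+2) := by ring
    have hA2 : 2 * ((Finset.univ : Finset (Fin (m+4) → Fin n)).filter
        (fun t => sortedVal (S5.Fv t) 1 - sortedVal (S5.Fv t) 0 = l'+1 ∧ 1 ≤ l'+1 ∧
          sortedVal (S5.Fv t) (m+3) - sortedVal (S5.Fv t) (m+2) ≤ l'+1)).card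
        ≤ (m+4) * ((m+3) * ((2*(l'+1)+1) * n ^ (m+2))) := by
      calc 2 * _ ≤ 2 * ((m+4) * ((Finset.univ : Finset (Fin (m+3) → Fin n)).filter
          (fun u => sortedVal (S5.Fv u) (m+2) - sortedVal (S5.Fv u) (m+1) ≤ l'+1)).card) :=
            Nat.mul_le_mul_left _ hA
      _ = (m+4) * (2 * ((Finset.univ : Finset (Fin (m+3) → Fin n)).filter
          (fun u => sortedVal (S5.Fv u) (m+2) - sortedVal (S5.Fv u) (m+1) ≤ l'+1)).card) := by
            ring
      _ ≤ (m+4) * ((m+3) * ((2*(l'+1)+1) * n ^ (m+2))) := Nat.mul_le_mul_left _ hUA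
    have hB2 : 2 * ((Finset.univ : Finset (Fin (m+4) → Fin n)).filter
        (fun t => sortedVal (S5.Fv t) (m+3) - sortedVal (S5.Fv t) (m+2) = l'+1 ∧ 1 ≤ l'+1 ∧
          sortedVal (S5.Fv t) 1 - sortedVal (S5.Fv t) 0 ≤ l'+1 - 1)).card
        ≤ (m+4) * ((m+3) * ((2*l'+1) * n ^ (m+2))) := by
      calc 2 * _ ≤ 2 * ((m+4) * ((Finset.univ : Finset (Fin (m+3) → Fin n)).filter
          (fun u => sortedVal (S5.Fv u) 1 - sortedVal (S5.Fv u) 0 ≤ l'+1 - 1)).card) :=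
            Nat.mul_le_mul_left _ hB
      _ = (m+4) * (2 * ((Finset.univ : Finset (Fin (m+3) → Fin n)).filter
          (fun u => sortedVal (S5.Fv u) 1 - sortedVal (S5.Fv u) 0 ≤ l'+1 - 1)).card) := by
            ring
      _ ≤ (m+4) * ((m+3) * ((2*l'+1) * n ^ (m+2))) := Nat.mul_le_mul_left _ hUB
    have c1 : 2 * ((Finset.univ : Finset (Fin (m+4) → Fin n)).filter
        (fun t => maxGap (fun j => (t j : ℕ) + 1) = l'+1)).card
        ≤ (m+4) * ((m+3) * ((2*(l'+1)+1) * n ^ (m+2)))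
          + (m+4) * ((m+3) * ((2*l'+1) * n ^ (m+2))) := by linarith
    rw [e1] at c1
    have c2 := Nat.le_of_mul_le_mul_left c1 (by norm_num : 0 < 2)
    exact le_trans c2 (le_trans e2 (le_of_eq e3))
  · -- l = 0
    intro h0
    subst h0
    have hsub : ((Finset.univ : Finset (Fin (m+4) → Fin n)).filter
        (fun t => maxGap (fun j => (t j : ℕ) + 1) = 0))
        ⊆ ((Finset.univ : Finset (Fin (m+4) → Fin n)).filter
          (fun t => sortedVal (S5.Fv t) 1 = sortedVal (S5.Fv t) 0 ∧
            sortedVal (S5.Fv t) (m+3) = sortedVal (S5.Fv t) (m+2))) := by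
      intro t ht
      rw [Finset.mem_filter, hpred t] at ht
      rw [Finset.mem_filter]
      have hm1 : sortedVal (S5.Fv t) 0 ≤ sortedVal (S5.Fv t) 1 :=
        S5.sortedVal_mono (S5.Fv t) (by omega) (by omega)
      have hm2 : sortedVal (S5.Fv t) (m+2) ≤ sortedVal (S5.Fv t) (m+3) :=
        S5.sortedVal_mono (S5.Fv t) (by omega) (by omega)
      have hmax := ht.2
      exact ⟨Finset.mem_univ _, by omega, by omega⟩
    have h1 := Finset.card_le_card hsub
    have h2 := S5.caseZero m n
    have e1 : (m+4) * ((m+3) * n ^ (m+2)) = ((m+4) * (m+3)) * n ^ (m+2) := by ring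
    have e2' : (m+4) * (m+3) ≤ Nat.factorial (m+4) :=
      le_trans (Nat.le_mul_of_pos_left _ (by norm_num : (0:ℕ) < 2)) hfact
    have e2 : ((m+4)*(m+3)) * n ^ (m+2) ≤ Nat.factorial (m+4) * n ^ (m+2) :=
      Nat.mul_le_mul_right _ e2'
    exact le_trans h1 (le_trans h2 ((le_of_eq e1).trans e2))
end

section
/- Let g_k: ℝ^k → ℝ and suppose there is a constant C such that for all index tuples i₁,...,i_{2k} in {1,...,n}, |E[g_k(X_{i₁},...,X_{i_k}) g_k(X_{i_{k+1}},...,X_{i_{2k}})]| ≤ C·β(l), where l = max{i_{(2)} - i_{(1)}, i_{(2k)} - i_{(2k-1)}} with i_{(1)} ≤ ... ≤ i_{(2k)} the ordered indices, and β: ℕ → [0,∞) satisfies Σ_{l=0}^{n} l·β(l) ≤ K·n^γ for some γ ≥ 0 and all n. Then Σ over all i₁,...,i_{2k} in {1,...,n} of |E[g_k(X_{i₁},...,X_{i_k}) g_k(X_{i_{k+1}},...,X_{i_{2k}})]| ≤ C' · n^{2k-2+γ} for a constant C' depending only on C, K, k. -/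
set_option maxHeartbeats 1000000


open MeasureTheory

lemma mergeSort_eq_ofFn_sort {N : ℕ} (t : Fin N → ℕ) :
    (List.ofFn t).mergeSort (· ≤ ·) = List.ofFn (t ∘ Tuple.sort t) :=
  List.Perm.eq_of_sortedLE (List.sortedLE_mergeSort (l := _)) ((Tuple.monotone_sort t).sortedLE_ofFn)
    ((List.mergeSort_perm _ _).trans ((Tuple.sort t).ofFn_comp_perm t).symm)

lemma sortedVal_eq {N : ℕ} (t : Fin N → ℕ) (j : ℕ) (h : j < N) :
    sortedVal t j = t (Tuple.sort t ⟨j, h⟩) := by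
  rw [sortedVal, mergeSort_eq_ofFn_sort, List.getD_eq_getElem _ _ (by simpa using h)]
  simp [List.getElem_ofFn]

lemma gap_decomp {N : ℕ} (hN : 4 ≤ N) (t : Fin N → ℕ) :
    ∃ a b c d : Fin N, a ≠ b ∧ a ≠ c ∧ a ≠ d ∧ b ≠ c ∧ b ≠ d ∧ c ≠ d ∧
      t a ≤ t b ∧ t c ≤ t d ∧ maxGap t = max (t b - t a) (t d - t c) := by
  have h0 : 0 < N := by omega
  have h1 : 1 < N := by omega
  have h2 : N - 2 < N := by omega
  have h3 : N - 1 < N := by omega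
  set σ := Tuple.sort t with hσ
  refine ⟨σ ⟨0, h0⟩, σ ⟨1, h1⟩, σ ⟨N - 2, h2⟩, σ ⟨N - 1, h3⟩, ?_, ?_, ?_, ?_, ?_, ?_, ?_, ?_, ?_⟩
  · exact fun h => by have := σ.injective h; simp [Fin.mk.injEq] at this
  · exact fun h => by have := σ.injective h; simp [Fin.mk.injEq] at this; omega
  · exact fun h => by have := σ.injective h; simp [Fin.mk.injEq] at this; omega
  · exact fun h => by have := σ.injective h; simp [Fin.mk.injEq] at this; omega
  · exact fun h => by have := σ.injective h; simp [Fin.mk.injEq] at this; omega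
  · exact fun h => by have := σ.injective h; simp [Fin.mk.injEq] at this; omega
  · exact Tuple.monotone_sort t (by simp [Fin.mk_le_mk])
  · exact Tuple.monotone_sort t (by simp [Fin.mk_le_mk]; omega)
  · rw [maxGap, sortedVal_eq t 0 h0, sortedVal_eq t 1 h1,
      sortedVal_eq t (N - 2) h2, sortedVal_eq t (N - 1) h3]

lemma fiber_card_le {N : ℕ} (a b c d : Fin N) (hab : a ≠ b) (hac : a ≠ c) (had : a ≠ d)
    (hbc : b ≠ c) (hbd : b ≠ d) (hcd : c ≠ d) (I : Finset ℕ) (p : ℕ × ℕ × ℕ × ℕ) :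
    ((Fintype.piFinset (fun _ : Fin N => I)).filter
        (fun i => (i a, i b, i c, i d) = p)).card ≤ I.card ^ (N - 4) := by
  classical
  set s : Finset (Fin N) := {a, b, c, d} with hs
  have hscard : s.card = 4 := by
    rw [hs]
    rw [Finset.card_insert_of_notMem (by simp [hab, hac, had]),
      Finset.card_insert_of_notMem (by simp [hbc, hbd]),
      Finset.card_insert_of_notMem (by simp [hcd]), Finset.card_singleton]
  have hcard : Fintype.card {j : Fin N // j ∉ s} = N - 4 := by
    rw [Fintype.card_subtype]
    have : Finset.univ.filter (fun j : Fin N => j ∉ s) = Finset.univ \ s := by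
      ext j; simp
    rw [this, Finset.card_sdiff_of_subset (Finset.subset_univ s)]
    simp [hscard]
  have := Finset.card_le_card_of_injOn
    (f := fun (i : Fin N → ℕ) => fun j : {j : Fin N // j ∉ s} => i j.1)
    (s := (Fintype.piFinset (fun _ : Fin N => I)).filter (fun i => (i a, i b, i c, i d) = p))
    (t := Fintype.piFinset (fun _ : {j : Fin N // j ∉ s} => I))
    (by
      intro i hi
      simp only [Finset.mem_coe, Finset.mem_filter, Fintype.mem_piFinset] at hi ⊢
      exact fun j => hi.1 j.1)
    (by
      intro i₁ h₁ i₂ h₂ hφ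
      simp only [Finset.coe_filter, Set.mem_setOf_eq, Fintype.mem_piFinset] at h₁ h₂
      funext j
      by_cases hj : j ∈ s
      · have e1 := h₁.2
        have e2 := h₂.2
        rw [Prod.ext_iff, Prod.ext_iff, Prod.ext_iff] at e1 e2
        simp only [hs, Finset.mem_insert, Finset.mem_singleton] at hj
        rcases hj with rfl | rfl | rfl | rfl
        · exact e1.1.trans e2.1.symm
        · exact e1.2.1.trans e2.2.1.symm
        · exact e1.2.2.1.trans e2.2.2.1.symm
        · exact e1.2.2.2.trans e2.2.2.2.symm
      · exact congrFun hφ ⟨j, hj⟩)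
  calc _ ≤ (Fintype.piFinset (fun _ : {j : Fin N // j ∉ s} => I)).card := this
    _ = I.card ^ (N - 4) := by rw [Fintype.card_piFinset]; simp [hcard]

lemma sum_piFinset_four {N : ℕ} (a b c d : Fin N) (hab : a ≠ b) (hac : a ≠ c) (had : a ≠ d)
    (hbc : b ≠ c) (hbd : b ≠ d) (hcd : c ≠ d) (I : Finset ℕ)
    (F : ℕ → ℕ → ℕ → ℕ → ℝ) (hF : ∀ x y z w, 0 ≤ F x y z w) :
    ∑ i ∈ Fintype.piFinset (fun _ : Fin N => I), F (i a) (i b) (i c) (i d)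
      ≤ (I.card : ℝ) ^ (N - 4) * ∑ x ∈ I, ∑ y ∈ I, ∑ z ∈ I, ∑ w ∈ I, F x y z w := by
  classical
  have hmaps : ∀ i ∈ Fintype.piFinset (fun _ : Fin N => I),
      (i a, i b, i c, i d) ∈ I ×ˢ I ×ˢ I ×ˢ I := by
    intro i hi
    simp only [Fintype.mem_piFinset] at hi
    simp [hi a, hi b, hi c, hi d]
  rw [← Finset.sum_fiberwise_of_maps_to hmaps (fun i => F (i a) (i b) (i c) (i d))]
  have hstep : ∀ p ∈ I ×ˢ I ×ˢ I ×ˢ I,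
      ∑ i ∈ (Fintype.piFinset (fun _ : Fin N => I)).filter
          (fun i => (i a, i b, i c, i d) = p), F (i a) (i b) (i c) (i d)
        ≤ (I.card : ℝ) ^ (N - 4) * F p.1 p.2.1 p.2.2.1 p.2.2.2 := by
    intro p _
    have hconst : ∀ i ∈ (Fintype.piFinset (fun _ : Fin N => I)).filter
        (fun i => (i a, i b, i c, i d) = p),
        F (i a) (i b) (i c) (i d) = F p.1 p.2.1 p.2.2.1 p.2.2.2 := by
      intro i hi
      have := (Finset.mem_filter.mp hi).2
      rw [Prod.ext_iff, Prod.ext_iff, Prod.ext_iff] at this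
      rw [show i a = p.1 from this.1, show i b = p.2.1 from this.2.1,
        show i c = p.2.2.1 from this.2.2.1, show i d = p.2.2.2 from this.2.2.2]
    rw [Finset.sum_congr rfl hconst, Finset.sum_const, nsmul_eq_mul]
    apply mul_le_mul_of_nonneg_right _ (hF _ _ _ _)
    calc ((_ : ℕ) : ℝ) ≤ ((I.card ^ (N - 4) : ℕ) : ℝ) := by
          exact_mod_cast fiber_card_le a b c d hab hac had hbc hbd hcd I p
      _ = (I.card : ℝ) ^ (N - 4) := by push_cast; ring
  refine le_trans (Finset.sum_le_sum hstep) (le_of_eq ?_)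
  rw [← Finset.mul_sum]
  congr 1
  simp only [Finset.sum_product]

lemma series_bound (n : ℕ) (hn : 1 ≤ n) (β : ℕ → ℝ) (hβ0 : ∀ l, 0 ≤ β l)
    (K γ : ℝ) (hsum : ∀ m : ℕ, ∑ l ∈ Finset.range (m + 1), (l : ℝ) * β l ≤ K * (m : ℝ) ^ γ) :
    ∑ j ∈ Finset.range (n + 1), ((j : ℝ) + 1) * β j ≤ β 0 + 2 * K * (n : ℝ) ^ γ := by
  have h1 : ∑ j ∈ Finset.range (n + 1), ((j : ℝ) + 1) * β j
      = (∑ j ∈ Finset.range (n + 1), (j : ℝ) * β j) + ∑ j ∈ Finset.range (n + 1), β j := by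
    rw [← Finset.sum_add_distrib]; exact Finset.sum_congr rfl fun j _ => by ring
  have h2 : ∑ j ∈ Finset.range (n + 1), β j ≤ β 0 + K * (n : ℝ) ^ γ := by
    have : ∑ j ∈ Finset.range (n + 1), β j
        = β 0 + ∑ j ∈ Finset.Ico 1 (n + 1), β j := by
      rw [Finset.range_eq_Ico,
        ← Finset.sum_Ico_consecutive _ (by omega : 0 ≤ 1) (by omega : 1 ≤ n + 1)]
      simp
    rw [this]
    refine add_le_add (le_refl _) ?_
    calc ∑ j ∈ Finset.Ico 1 (n + 1), β j ≤ ∑ j ∈ Finset.Ico 1 (n + 1), (j : ℝ) * β j := by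
          refine Finset.sum_le_sum fun j hj => ?_
          have : (1 : ℝ) ≤ (j : ℝ) := by
            have := (Finset.mem_Ico.mp hj).1; exact_mod_cast this
          nlinarith [hβ0 j]
      _ ≤ ∑ j ∈ Finset.range (n + 1), (j : ℝ) * β j := by
          rw [Finset.range_eq_Ico]
          refine Finset.sum_le_sum_of_subset_of_nonneg (by intro x hx; simp at hx ⊢; omega)
            fun j _ _ => mul_nonneg (by positivity) (hβ0 j)
      _ ≤ K * (n : ℝ) ^ γ := hsum n
  have h3 := hsum n
  rw [h1]; linarith

lemma foursum_bound (n : ℕ) (hn : 1 ≤ n) (β : ℕ → ℝ) (hβ0 : ∀ l, 0 ≤ β l)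
    (K γ : ℝ) (hsum : ∀ m : ℕ, ∑ l ∈ Finset.range (m + 1), (l : ℝ) * β l ≤ K * (m : ℝ) ^ γ) :
    ∑ x ∈ Finset.Icc 1 n, ∑ y ∈ Finset.Icc 1 n, ∑ z ∈ Finset.Icc 1 n, ∑ w ∈ Finset.Icc 1 n,
        (if x ≤ y ∧ z ≤ w ∧ w - z ≤ y - x then β (y - x) else 0)
      ≤ (n : ℝ) ^ 2 * (β 0 + 2 * K * (n : ℝ) ^ γ) := by
  have hstuff : ∀ u : ℕ, (0:ℝ) ≤ (n : ℝ) * (((u : ℝ) + 1) * β u) := fun u => by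
    have := hβ0 u; positivity
  have hzw : ∀ x y : ℕ, x ≤ y →
      ∑ z ∈ Finset.Icc 1 n, ∑ w ∈ Finset.Icc 1 n,
          (if x ≤ y ∧ z ≤ w ∧ w - z ≤ y - x then β (y - x) else 0)
        ≤ (n : ℝ) * (((y - x : ℕ) : ℝ) + 1) * β (y - x) := by
    intro x y hxy
    have hw : ∀ z : ℕ, ∑ w ∈ Finset.Icc 1 n,
        (if x ≤ y ∧ z ≤ w ∧ w - z ≤ y - x then β (y - x) else 0)
          ≤ (((y - x : ℕ) : ℝ) + 1) * β (y - x) := by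
      intro z
      rw [← Finset.sum_filter]
      rw [Finset.sum_const]
      have hsub : (Finset.Icc 1 n).filter (fun w => x ≤ y ∧ z ≤ w ∧ w - z ≤ y - x)
          ⊆ Finset.Icc z (z + (y - x)) := by
        intro w hw
        simp only [Finset.mem_filter, Finset.mem_Icc] at hw ⊢
        omega
      have hcard := Finset.card_le_card hsub
      rw [Nat.card_Icc] at hcard
      rw [nsmul_eq_mul]
      refine mul_le_mul_of_nonneg_right ?_ (hβ0 _)
      calc ((_ : ℕ) : ℝ) ≤ ((z + (y - x) + 1 - z : ℕ) : ℝ) := by exact_mod_cast hcard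
        _ = ((y - x : ℕ) : ℝ) + 1 := by push_cast [show z + (y-x) + 1 - z = (y-x)+1 by omega]; ring
    calc _ ≤ ∑ _z ∈ Finset.Icc 1 n, (((y - x : ℕ) : ℝ) + 1) * β (y - x) :=
          Finset.sum_le_sum fun z _ => hw z
      _ = (n : ℝ) * (((y - x : ℕ) : ℝ) + 1) * β (y - x) := by
          rw [Finset.sum_const, Nat.card_Icc, nsmul_eq_mul]
          push_cast [show n + 1 - 1 = n by omega]; ring
  have hy : ∀ x : ℕ, x ∈ Finset.Icc 1 n →
      ∑ y ∈ Finset.Icc 1 n, ∑ z ∈ Finset.Icc 1 n, ∑ w ∈ Finset.Icc 1 n,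
          (if x ≤ y ∧ z ≤ w ∧ w - z ≤ y - x then β (y - x) else 0)
        ≤ (n : ℝ) * (β 0 + 2 * K * (n : ℝ) ^ γ) := by
    intro x hx
    simp only [Finset.mem_Icc] at hx
    have step1 : ∑ y ∈ Finset.Icc 1 n, ∑ z ∈ Finset.Icc 1 n, ∑ w ∈ Finset.Icc 1 n,
          (if x ≤ y ∧ z ≤ w ∧ w - z ≤ y - x then β (y - x) else 0)
        ≤ ∑ y ∈ Finset.Icc 1 n,
            (if x ≤ y then (n : ℝ) * ((((y - x : ℕ) : ℝ) + 1) * β (y - x)) else 0) := by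
      refine Finset.sum_le_sum fun y _ => ?_
      by_cases hxy : x ≤ y
      · rw [if_pos hxy]
        refine le_trans (hzw x y hxy) (le_of_eq (by ring))
      · rw [if_neg hxy]
        refine le_of_eq (Finset.sum_eq_zero fun z _ => Finset.sum_eq_zero fun w _ => ?_)
        simp [hxy]
    refine le_trans step1 ?_
    have step2 : ∑ y ∈ Finset.Icc 1 n,
          (if x ≤ y then (n : ℝ) * ((((y - x : ℕ) : ℝ) + 1) * β (y - x)) else 0)
        = ∑ y ∈ Finset.Icc x n, (n : ℝ) * ((((y - x : ℕ) : ℝ) + 1) * β (y - x)) := by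
      rw [← Finset.sum_filter]
      congr 1
      ext y
      simp only [Finset.mem_filter, Finset.mem_Icc]
      omega
    rw [step2]
    have step3 : ∑ y ∈ Finset.Icc x n, (n : ℝ) * ((((y - x : ℕ) : ℝ) + 1) * β (y - x))
        = ∑ j ∈ Finset.range (n + 1 - x), (n : ℝ) * (((j : ℕ) : ℝ) + 1) * β j := by
      rw [show Finset.Icc x n = Finset.Ico x (n + 1) by rw [Finset.Ico_add_one_right_eq_Icc],
        Finset.sum_Ico_eq_sum_range]
      exact Finset.sum_congr rfl fun j _ => by
        rw [show x + j - x = j by omega]; ring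
    rw [step3]
    calc ∑ j ∈ Finset.range (n + 1 - x), (n : ℝ) * (((j : ℕ) : ℝ) + 1) * β j
        ≤ ∑ j ∈ Finset.range (n + 1), (n : ℝ) * (((j : ℕ) : ℝ) + 1) * β j := by
          refine Finset.sum_le_sum_of_subset_of_nonneg
            (Finset.range_subset_range.mpr (by omega)) fun j _ _ => ?_
          have := hβ0 j; positivity
      _ = (n : ℝ) * ∑ j ∈ Finset.range (n + 1), ((j : ℝ) + 1) * β j := by
          rw [Finset.mul_sum]; exact Finset.sum_congr rfl fun j _ => by ring
      _ ≤ (n : ℝ) * (β 0 + 2 * K * (n : ℝ) ^ γ) := by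
          refine mul_le_mul_of_nonneg_left (series_bound n hn β hβ0 K γ hsum) (by positivity)
  calc _ ≤ ∑ _x ∈ Finset.Icc 1 n, (n : ℝ) * (β 0 + 2 * K * (n : ℝ) ^ γ) :=
        Finset.sum_le_sum hy
    _ = (n : ℝ) ^ 2 * (β 0 + 2 * K * (n : ℝ) ^ γ) := by
        rw [Finset.sum_const, Nat.card_Icc, nsmul_eq_mul]
        push_cast [show n + 1 - 1 = n by omega]; ring

/-- Master combinatorial lemma: the sum of `β (maxGap i)` over all tuples. -/
lemma maxGap_sum_bound {N : ℕ} (hN : 4 ≤ N) (n : ℕ) (hn : 1 ≤ n)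
    (β : ℕ → ℝ) (hβ0 : ∀ l, 0 ≤ β l) (K γ : ℝ)
    (hsum : ∀ m : ℕ, ∑ l ∈ Finset.range (m + 1), (l : ℝ) * β l ≤ K * (m : ℝ) ^ γ) :
    ∑ i ∈ Fintype.piFinset (fun _ : Fin N => Finset.Icc 1 n), β (maxGap i)
      ≤ ((N : ℝ) ^ 4 * 2) *
        ((n : ℝ) ^ (N - 4) * ((n : ℝ) ^ 2 * (β 0 + 2 * K * (n : ℝ) ^ γ))) := by
  classical
  have hK : 0 ≤ K := by
    have := hsum 1
    simp [Finset.sum_range_succ] at this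
    linarith [hβ0 1]
  set F : ℕ → ℕ → ℕ → ℕ → ℝ :=
    fun x y z w => if x ≤ y ∧ z ≤ w ∧ w - z ≤ y - x then β (y - x) else 0 with hF
  have hFpos : ∀ x y z w, 0 ≤ F x y z w := by
    intro x y z w
    rw [hF]
    dsimp only
    split
    · exact hβ0 _
    · exact le_refl 0
  set Q : Finset (Fin N × Fin N × Fin N × Fin N) :=
    Finset.univ.filter (fun q => q.1 ≠ q.2.1 ∧ q.1 ≠ q.2.2.1 ∧ q.1 ≠ q.2.2.2 ∧
      q.2.1 ≠ q.2.2.1 ∧ q.2.1 ≠ q.2.2.2 ∧ q.2.2.1 ≠ q.2.2.2) with hQ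
  set G : (Fin N → ℕ) → (Fin N × Fin N × Fin N × Fin N) → ℝ :=
    fun i q => F (i q.1) (i q.2.1) (i q.2.2.1) (i q.2.2.2)
      + F (i q.2.2.1) (i q.2.2.2) (i q.1) (i q.2.1) with hG
  have hGpos : ∀ i q, 0 ≤ G i q := fun i q => add_nonneg (hFpos _ _ _ _) (hFpos _ _ _ _)
  -- pointwise bound
  have hpoint : ∀ i : Fin N → ℕ, β (maxGap i) ≤ ∑ q ∈ Q, G i q := by
    intro i
    obtain ⟨a, b, c, d, hab, hac, had, hbc, hbd, hcd, h1, h2, h3⟩ := gap_decomp hN i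
    have hq0 : (a, b, c, d) ∈ Q := by
      rw [hQ]; simp [hab, hac, had, hbc, hbd, hcd]
    refine le_trans ?_ (Finset.single_le_sum (fun q _ => hGpos i q) hq0)
    rw [hG]
    dsimp only
    by_cases hcase : i d - i c ≤ i b - i a
    · have : max (i b - i a) (i d - i c) = i b - i a := max_eq_left hcase
      rw [h3, this, hF]
      have : (if i a ≤ i b ∧ i c ≤ i d ∧ i d - i c ≤ i b - i a
          then β (i b - i a) else 0) = β (i b - i a) := if_pos ⟨h1, h2, hcase⟩
      dsimp only
      rw [this]
      have := hFpos (i c) (i d) (i a) (i b)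
      rw [hF] at this
      linarith
    · have hle : i b - i a ≤ i d - i c := by omega
      have : max (i b - i a) (i d - i c) = i d - i c := max_eq_right hle
      rw [h3, this, hF]
      have : (if i c ≤ i d ∧ i a ≤ i b ∧ i b - i a ≤ i d - i c
          then β (i d - i c) else 0) = β (i d - i c) := if_pos ⟨h2, h1, hle⟩
      dsimp only
      rw [this]
      have := hFpos (i a) (i b) (i c) (i d)
      rw [hF] at this
      linarith
  -- sum over all tuples
  have hfour := foursum_bound n hn β hβ0 K γ hsum
  have hcardIcc : (Finset.Icc 1 n).card = n := by rw [Nat.card_Icc]; omega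
  have hB : ∀ q ∈ Q, ∑ i ∈ Fintype.piFinset (fun _ : Fin N => Finset.Icc 1 n), G i q
      ≤ 2 * ((n : ℝ) ^ (N - 4) * ((n : ℝ) ^ 2 * (β 0 + 2 * K * (n : ℝ) ^ γ))) := by
    intro q hq
    rw [hQ] at hq
    simp only [Finset.mem_filter, Finset.mem_univ, true_and] at hq
    obtain ⟨hab, hac, had, hbc, hbd, hcd⟩ := hq
    rw [hG]
    dsimp only
    rw [Finset.sum_add_distrib]
    have b1 : ∑ i ∈ Fintype.piFinset (fun _ : Fin N => Finset.Icc 1 n),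
        F (i q.1) (i q.2.1) (i q.2.2.1) (i q.2.2.2)
        ≤ (n : ℝ) ^ (N - 4) * ((n : ℝ) ^ 2 * (β 0 + 2 * K * (n : ℝ) ^ γ)) := by
      refine le_trans (sum_piFinset_four q.1 q.2.1 q.2.2.1 q.2.2.2 hab hac had hbc hbd hcd
        (Finset.Icc 1 n) F hFpos) ?_
      rw [hcardIcc]
      exact mul_le_mul_of_nonneg_left hfour (by positivity)
    have b2 : ∑ i ∈ Fintype.piFinset (fun _ : Fin N => Finset.Icc 1 n),
        F (i q.2.2.1) (i q.2.2.2) (i q.1) (i q.2.1)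
        ≤ (n : ℝ) ^ (N - 4) * ((n : ℝ) ^ 2 * (β 0 + 2 * K * (n : ℝ) ^ γ)) := by
      refine le_trans (sum_piFinset_four q.2.2.1 q.2.2.2 q.1 q.2.1 hcd hac.symm hbc.symm
        had.symm hbd.symm hab (Finset.Icc 1 n) F hFpos) ?_
      rw [hcardIcc]
      exact mul_le_mul_of_nonneg_left hfour (by positivity)
    linarith
  calc ∑ i ∈ Fintype.piFinset (fun _ : Fin N => Finset.Icc 1 n), β (maxGap i)
      ≤ ∑ i ∈ Fintype.piFinset (fun _ : Fin N => Finset.Icc 1 n), ∑ q ∈ Q, G i q :=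
        Finset.sum_le_sum fun i _ => hpoint i
    _ = ∑ q ∈ Q, ∑ i ∈ Fintype.piFinset (fun _ : Fin N => Finset.Icc 1 n), G i q :=
        Finset.sum_comm
    _ ≤ ∑ _q ∈ Q, 2 * ((n : ℝ) ^ (N - 4) * ((n : ℝ) ^ 2 * (β 0 + 2 * K * (n : ℝ) ^ γ))) :=
        Finset.sum_le_sum hB
    _ ≤ ((N : ℝ) ^ 4 * 2) *
        ((n : ℝ) ^ (N - 4) * ((n : ℝ) ^ 2 * (β 0 + 2 * K * (n : ℝ) ^ γ))) := by
        rw [Finset.sum_const, nsmul_eq_mul]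
        have hQcard : (Q.card : ℝ) ≤ (N : ℝ) ^ 4 := by
          have h1 : Q.card ≤ Fintype.card (Fin N × Fin N × Fin N × Fin N) := by
            rw [hQ]
            exact le_trans (Finset.card_filter_le _ _) (le_of_eq (Finset.card_univ))
          have h2 : Fintype.card (Fin N × Fin N × Fin N × Fin N) = N ^ 4 := by
            simp [Fintype.card_prod]; ring
          calc (Q.card : ℝ) ≤ ((N ^ 4 : ℕ) : ℝ) := by exact_mod_cast h1.trans (le_of_eq h2)
            _ = (N : ℝ) ^ 4 := by push_cast; ring
        have hpos : (0:ℝ) ≤ 2 * ((n : ℝ) ^ (N - 4) * ((n : ℝ) ^ 2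
            * (β 0 + 2 * K * (n : ℝ) ^ γ))) := by
          have h0 := hβ0 0
          have : (0:ℝ) ≤ (n:ℝ) ^ γ := Real.rpow_nonneg (by positivity) γ
          positivity
        nlinarith

/-- If the covariances of the degenerate kernel `g_k` are bounded by `C·β(l)` in terms of the
gap `l` of the index tuple, and `Σ_{l ≤ n} l·β(l) ≤ K·n^γ`, then the full covariance sum over
all index tuples in `{1,...,n}` is `O(n^{2k-2+γ})`. -/
theorem stmt6 {Ω : Type*} [MeasurableSpace Ω] (μ : Measure Ω) [IsProbabilityMeasure μ]
    (X : ℕ → Ω → ℝ) (k : ℕ) (hk : 2 ≤ k) (g : (Fin k → ℝ) → ℝ)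
    (hXmeas : ∀ i, Measurable (X i)) (hgmeas : Measurable g)
    (hint : ∀ i : Fin (k + k) → ℕ,
      Integrable (fun ω => g (fun a => X (i (Fin.castAdd k a)) ω) *
        g (fun a => X (i (Fin.natAdd k a)) ω)) μ)
    (β : ℕ → ℝ) (hβ0 : ∀ l, 0 ≤ β l) (C : ℝ) (γ : ℝ) (hγ : 0 ≤ γ) (K : ℝ)
    (hcov : ∀ i : Fin (k + k) → ℕ,
      |∫ ω, g (fun a => X (i (Fin.castAdd k a)) ω) *
          g (fun a => X (i (Fin.natAdd k a)) ω) ∂μ| ≤ C * β (maxGap i))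
    (hsum : ∀ n : ℕ, ∑ l ∈ Finset.range (n + 1), (l : ℝ) * β l ≤ K * (n : ℝ) ^ γ) :
    ∃ C' : ℝ, ∀ n : ℕ, 1 ≤ n →
      ∑ i ∈ Fintype.piFinset (fun _ : Fin (k + k) => Finset.Icc 1 n),
          |∫ ω, g (fun a => X (i (Fin.castAdd k a)) ω) *
              g (fun a => X (i (Fin.natAdd k a)) ω) ∂μ|
        ≤ C' * (n : ℝ) ^ ((2 * k - 2 : ℝ) + γ) := by
  have hN : 4 ≤ k + k := by omega
  refine ⟨|C| * (((k + k : ℕ) : ℝ) ^ 4 * 2) * (β 0 + 2 * K), ?_⟩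
  intro n hn
  have hn0 : (0:ℝ) < (n : ℝ) := by exact_mod_cast hn
  have hK : 0 ≤ K := by
    have := hsum 1
    simp [Finset.sum_range_succ] at this
    linarith [hβ0 1]
  have h1γ : 1 ≤ (n : ℝ) ^ γ := Real.one_le_rpow (by exact_mod_cast hn) hγ
  have hγ0 : (0:ℝ) ≤ (n : ℝ) ^ γ := by linarith
  have main := maxGap_sum_bound hN n hn β hβ0 K γ hsum
  have step1 : ∑ i ∈ Fintype.piFinset (fun _ : Fin (k + k) => Finset.Icc 1 n),
        |∫ ω, g (fun a => X (i (Fin.castAdd k a)) ω) *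
            g (fun a => X (i (Fin.natAdd k a)) ω) ∂μ|
      ≤ |C| * ∑ i ∈ Fintype.piFinset (fun _ : Fin (k + k) => Finset.Icc 1 n),
          β (maxGap i) := by
    rw [Finset.mul_sum]
    refine Finset.sum_le_sum fun i _ => ?_
    exact (hcov i).trans (mul_le_mul_of_nonneg_right (le_abs_self C) (hβ0 _))
  refine le_trans step1 ?_
  refine le_trans (mul_le_mul_of_nonneg_left main (abs_nonneg C)) ?_
  -- algebra with powers
  have e1 : (n : ℝ) ^ (k + k - 4) * (n : ℝ) ^ 2 = (n : ℝ) ^ (k + k - 2) := by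
    rw [← pow_add]; congr 1; omega
  have e2 : (n : ℝ) ^ (k + k - 2) = (n : ℝ) ^ ((2 * k - 2 : ℝ)) := by
    rw [← Real.rpow_natCast (n : ℝ) (k + k - 2)]
    congr 1
    rw [Nat.cast_sub (by omega)]
    push_cast; ring
  have e3 : (n : ℝ) ^ ((2 * k - 2 : ℝ) + γ) = (n : ℝ) ^ ((2 * k - 2 : ℝ)) * (n : ℝ) ^ γ :=
    Real.rpow_add hn0 _ _
  have hP : (0:ℝ) ≤ (n : ℝ) ^ ((2 * k - 2 : ℝ)) := Real.rpow_nonneg (le_of_lt hn0) _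
  have inner : (n : ℝ) ^ (k + k - 4) * ((n : ℝ) ^ 2 * (β 0 + 2 * K * (n : ℝ) ^ γ))
      ≤ (β 0 + 2 * K) * (n : ℝ) ^ ((2 * k - 2 : ℝ) + γ) := by
    calc (n : ℝ) ^ (k + k - 4) * ((n : ℝ) ^ 2 * (β 0 + 2 * K * (n : ℝ) ^ γ))
        = (n : ℝ) ^ ((2 * k - 2 : ℝ)) * (β 0 + 2 * K * (n : ℝ) ^ γ) := by
          rw [← mul_assoc, e1, e2]
      _ ≤ (β 0 + 2 * K) * ((n : ℝ) ^ ((2 * k - 2 : ℝ)) * (n : ℝ) ^ γ) := by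
          nlinarith [mul_nonneg (mul_nonneg hP (hβ0 0)) (sub_nonneg.mpr h1γ)]
      _ = (β 0 + 2 * K) * (n : ℝ) ^ ((2 * k - 2 : ℝ) + γ) := by rw [e3]
  calc |C| * ((((k + k : ℕ) : ℝ)) ^ 4 * 2 *
        ((n : ℝ) ^ (k + k - 4) * ((n : ℝ) ^ 2 * (β 0 + 2 * K * (n : ℝ) ^ γ))))
      ≤ |C| * ((((k + k : ℕ) : ℝ)) ^ 4 * 2 *
        ((β 0 + 2 * K) * (n : ℝ) ^ ((2 * k - 2 : ℝ) + γ))) := by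
        refine mul_le_mul_of_nonneg_left ?_ (abs_nonneg C)
        refine mul_le_mul_of_nonneg_left inner (by positivity)
    _ = |C| * (((k + k : ℕ) : ℝ) ^ 4 * 2) * (β 0 + 2 * K) * (n : ℝ) ^ ((2 * k - 2 : ℝ) + γ) := by
        ring
end

section
/- Let h: ℝ^m → ℝ be Lipschitz with constant L̃ and suppose h(X₁',...,X_m') (for independent X_i') has density h_F with sup h_F ≤ M. Let J: [0,1] → ℝ be bounded with C := ∫_{−∞}^{∞} |J(H_F(y))| dy < ∞. Then the kernel A₁(x₁,...,x_m) = ∫_{−∞}^{∞} (1[h(x₁,...,x_m) ≤ y] − H_F(y)) J(H_F(y)) dy satisfies the variation condition: E[sup_{‖(x₁,...,x_m)−(X₁',...,X_m')‖ ≤ ε} |A₁(x₁,...,x_m) − A₁(X₁',...,X_m')|] ≤ C · 2 M L̃ · ε for all ε > 0. -/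
open MeasureTheory ProbabilityTheory

/-- The kernel `A₁(x) = ∫ (1[h(x) ≤ y] − H_F(y)) J(H_F(y)) dy` built from a Lipschitz kernel
`h` whose value has a bounded density satisfies the variation condition with constant
`C · 2 M Ltilde`, where `C = ∫ |J(H_F(y))| dy`. -/
theorem stmt11 {m : ℕ} {Ω : Type*} [MeasurableSpace Ω] (μ : Measure Ω) [IsProbabilityMeasure μ]
    (h : EuclideanSpace ℝ (Fin m) → ℝ) (Ltilde : NNReal) (hlip : LipschitzWith Ltilde h)
    (X : Ω → EuclideanSpace ℝ (Fin m))
    (hX : ∀ i, Measurable fun ω => X ω i)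
    (hind : iIndepFun (fun i ω => X ω i) μ)
    -- `h(X)` has bounded density `h_F`, with distribution function `H_F`
    (h_F : ℝ → ℝ) (M : ℝ) (hFnonneg : ∀ x, 0 ≤ h_F x) (hFbdd : ∀ x, h_F x ≤ M)
    (hdens : μ.map (fun ω => h (X ω)) =
      MeasureTheory.volume.withDensity (fun x => ENNReal.ofReal (h_F x)))
    (H_F : ℝ → ℝ) (hHF : ∀ y, H_F y = (μ {ω | h (X ω) ≤ y}).toReal)
    -- `J` is bounded with `C = ∫ |J(H_F(y))| dy < ∞`
    (J : ℝ → ℝ) (MJ : ℝ) (hJbdd : ∀ u, |J u| ≤ MJ)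
    (hJint : Integrable (fun y => |J (H_F y)|))
    (C : ℝ) (hC : C = ∫ y : ℝ, |J (H_F y)|)
    -- the kernel `A₁`
    (A₁ : EuclideanSpace ℝ (Fin m) → ℝ)
    (hA₁ : ∀ x, A₁ x = ∫ y : ℝ, (ind (h x ≤ y) - H_F y) * J (H_F y)) :
    ∀ ε : ℝ, 0 < ε →
      ∫ ω, (⨆ x : {x : EuclideanSpace ℝ (Fin m) // dist x (X ω) ≤ ε},
          |A₁ x.1 - A₁ (X ω)|) ∂μ ≤ C * (2 * M * (Ltilde : ℝ)) * ε := by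
  intro ε hε
  have hM0 : 0 ≤ M := le_trans (hFnonneg 0) (hFbdd 0)
  have hC0 : 0 ≤ C := by rw [hC]; exact integral_nonneg fun y => abs_nonneg _
  have hL0 : (0:ℝ) ≤ (Ltilde : ℝ) := Ltilde.2
  have hRHS0 : 0 ≤ C * (2 * M * (Ltilde:ℝ)) * ε :=
    mul_nonneg (mul_nonneg hC0 (mul_nonneg (mul_nonneg (by norm_num) hM0) hL0)) hε.le
  have hne : ∀ ω, Nonempty {x : EuclideanSpace ℝ (Fin m) // dist x (X ω) ≤ ε} :=
    fun ω => ⟨⟨X ω, by simp [hε.le]⟩⟩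
  have hHF0 : ∀ y, 0 ≤ H_F y := fun y => (hHF y) ▸ ENNReal.toReal_nonneg
  have hHF1 : ∀ y, H_F y ≤ 1 := by
    intro y
    rw [hHF y]
    simpa using ENNReal.toReal_mono ENNReal.one_ne_top prob_le_one
  have hmono : Monotone H_F := by
    intro y y' hyy
    rw [hHF y, hHF y']
    exact ENNReal.toReal_mono (measure_ne_top μ _)
      (measure_mono fun ω hw => le_trans hw hyy)
  have hmHF : Measurable H_F := hmono.measurable
  have hmc : ∀ t : ℝ, Measurable fun y : ℝ => ind (t ≤ y) - H_F y := by
    intro t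
    apply Measurable.sub _ hmHF
    unfold ind
    exact Measurable.ite (measurableSet_Ici (a := t)) measurable_const measurable_const
  have hcbd : ∀ t y : ℝ, |ind (t ≤ y) - H_F y| ≤ 1 := by
    intro t y
    rw [abs_le]
    unfold ind
    split_ifs <;> constructor <;> linarith [hHF0 y, hHF1 y]
  by_cases hφm : AEStronglyMeasurable (fun y => J (H_F y)) (volume : Measure ℝ)
  · -- main case
    set a : ℝ := (Ltilde : ℝ) * ε with ha
    have ha0 : 0 ≤ a := mul_nonneg hL0 hε.le
    have hφint : Integrable (fun y => J (H_F y)) (volume : Measure ℝ) :=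
      (integrable_norm_iff hφm).mp (by simpa [Real.norm_eq_abs] using hJint)
    have hfint : ∀ x, Integrable (fun y => (ind (h x ≤ y) - H_F y) * J (H_F y))
        (volume : Measure ℝ) := fun x =>
      hφint.bdd_mul (hmc (h x)).aestronglyMeasurable
        (c := 1) (Filter.Eventually.of_forall fun y => by simpa [Real.norm_eq_abs] using hcbd (h x) y)
    set G : ℝ → ℝ :=
      fun t => ∫ y, (Set.Icc (t - a) (t + a)).indicator (fun y => |J (H_F y)|) y with hGdef
    have hGF : ∀ t, G t = (∫ y in Set.Iic (t + a), |J (H_F y)|) -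
        ∫ y in Set.Iic (t - a), |J (H_F y)| := by
      intro t
      show (∫ y, (Set.Icc (t - a) (t + a)).indicator (fun y => |J (H_F y)|) y) = _
      rw [integral_indicator measurableSet_Icc, integral_Icc_eq_integral_Ioc,
        ← intervalIntegral.integral_of_le (by linarith),
        intervalIntegral.integral_Iic_sub_Iic hJint.integrableOn hJint.integrableOn]
    have hFmono : Monotone fun u => ∫ y in Set.Iic u, |J (H_F y)| := by
      intro u v huv
      exact setIntegral_mono_set hJint.integrableOn
        (Filter.Eventually.of_forall fun y => abs_nonneg _)
        (HasSubset.Subset.eventuallyLE (Set.Iic_subset_Iic.2 huv))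
    have hGmeas : Measurable G := by
      have h1 : Measurable fun t : ℝ => ∫ y in Set.Iic (t + a), |J (H_F y)| :=
        (hFmono.comp (fun u v huv => by dsimp; linarith : Monotone fun t : ℝ => t + a)).measurable
      have h2 : Measurable fun t : ℝ => ∫ y in Set.Iic (t - a), |J (H_F y)| :=
        (hFmono.comp (fun u v huv => by dsimp; linarith : Monotone fun t : ℝ => t - a)).measurable
      have : G = fun t => (∫ y in Set.Iic (t + a), |J (H_F y)|) -
          ∫ y in Set.Iic (t - a), |J (H_F y)| := funext hGF
      rw [this]
      exact h1.sub h2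
    have hG0 : ∀ t, 0 ≤ G t := fun t =>
      integral_nonneg (Set.indicator_nonneg fun y _ => abs_nonneg _)
    have hbound : ∀ ω, ∀ x : EuclideanSpace ℝ (Fin m), dist x (X ω) ≤ ε →
        |A₁ x - A₁ (X ω)| ≤ G (h (X ω)) := by
      intro ω x hx
      have hdh : |h x - h (X ω)| ≤ a := by
        have h1 := hlip.dist_le_mul x (X ω)
        rw [Real.dist_eq] at h1
        refine h1.trans ?_
        rw [ha]
        exact mul_le_mul_of_nonneg_left hx hL0
      have hdh' := abs_le.mp hdh
      have hsub : A₁ x - A₁ (X ω) =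
          ∫ y, (ind (h x ≤ y) - ind (h (X ω) ≤ y)) * J (H_F y) := by
        rw [hA₁, hA₁, ← integral_sub (hfint x) (hfint (X ω))]
        congr 1; funext y; ring
      rw [hsub, ← Real.norm_eq_abs]
      calc ‖∫ y, (ind (h x ≤ y) - ind (h (X ω) ≤ y)) * J (H_F y)‖
          ≤ ∫ y, ‖(ind (h x ≤ y) - ind (h (X ω) ≤ y)) * J (H_F y)‖ :=
            norm_integral_le_integral_norm _
        _ ≤ ∫ y, (Set.Icc (h (X ω) - a) (h (X ω) + a)).indicator
              (fun y => |J (H_F y)|) y := by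
            refine integral_mono_of_nonneg
              (Filter.Eventually.of_forall fun y => norm_nonneg _)
              (hJint.indicator measurableSet_Icc)
              (Filter.Eventually.of_forall ?_)
            intro y
            dsimp only
            by_cases hy : y ∈ Set.Icc (h (X ω) - a) (h (X ω) + a)
            · rw [Set.indicator_of_mem hy, Real.norm_eq_abs, abs_mul]
              have h1 : |ind (h x ≤ y) - ind (h (X ω) ≤ y)| ≤ 1 := by
                unfold ind; split_ifs <;> norm_num
              nlinarith [abs_nonneg (J (H_F y)),
                abs_nonneg (ind (h x ≤ y) - ind (h (X ω) ≤ y))]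
            · rw [Set.indicator_of_notMem hy]
              simp only [Set.mem_Icc, not_and_or, not_le] at hy
              have hDz : ind (h x ≤ y) = ind (h (X ω) ≤ y) := by
                rcases hy with hy | hy
                · have hx1 : ¬ h x ≤ y := by linarith [hdh'.2]
                  have hx2 : ¬ h (X ω) ≤ y := by linarith
                  simp [ind, hx1, hx2]
                · have hx1 : h x ≤ y := by linarith [hdh'.1]
                  have hx2 : h (X ω) ≤ y := by linarith
                  simp [ind, hx1, hx2]
              simp [hDz]
        _ = G (h (X ω)) := rfl
    have hsup : ∀ ω, (⨆ x : {x : EuclideanSpace ℝ (Fin m) // dist x (X ω) ≤ ε},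
        |A₁ x.1 - A₁ (X ω)|) ≤ G (h (X ω)) := by
      intro ω
      have := hne ω
      exact ciSup_le fun x => hbound ω x.1 x.2
    have hsup0 : ∀ ω, 0 ≤ (⨆ x : {x : EuclideanSpace ℝ (Fin m) // dist x (X ω) ≤ ε},
        |A₁ x.1 - A₁ (X ω)|) := fun ω => Real.iSup_nonneg fun x => abs_nonneg _
    have hmX : Measurable X :=
      (WithLp.measurable_toLp 2 _).comp (measurable_pi_lambda (fun ω i => X ω i) hX)
    have hmhX : Measurable fun ω => h (X ω) := hlip.continuous.measurable.comp hmX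
    -- key lintegral bound
    have hofC : ∫⁻ y, ENNReal.ofReal (|J (H_F y)|) = ENNReal.ofReal C := by
      rw [hC, ← ofReal_integral_eq_lintegral_ofReal hJint
        (Filter.Eventually.of_forall fun y => abs_nonneg _)]
    have htonelli : ∫⁻ t, ENNReal.ofReal (G t) = ENNReal.ofReal C * ENNReal.ofReal (2 * a) := by
      have hGof : ∀ t, ENNReal.ofReal (G t) = ∫⁻ y,
          (Set.Icc (t - a) (t + a)).indicator (fun y => ENNReal.ofReal (|J (H_F y)|)) y := by
        intro t
        rw [hGdef]
        rw [ofReal_integral_eq_lintegral_ofReal (hJint.indicator measurableSet_Icc)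
          (Filter.Eventually.of_forall (Set.indicator_nonneg fun y _ => abs_nonneg _))]
        congr 1
        funext y
        by_cases hy : y ∈ Set.Icc (t - a) (t + a) <;> simp [hy]
      calc ∫⁻ t, ENNReal.ofReal (G t)
          = ∫⁻ t, ∫⁻ y, (Set.Icc (t - a) (t + a)).indicator
              (fun y => ENNReal.ofReal (|J (H_F y)|)) y := by
            exact lintegral_congr hGof
        _ = ∫⁻ y, ∫⁻ t, (Set.Icc (t - a) (t + a)).indicator
              (fun y => ENNReal.ofReal (|J (H_F y)|)) y := by
            apply lintegral_lintegral_swap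
            have heq : (Function.uncurry fun t y => (Set.Icc (t - a) (t + a)).indicator
                (fun y => ENNReal.ofReal (|J (H_F y)|)) y) =
                Set.indicator {p : ℝ × ℝ | p.1 - a ≤ p.2 ∧ p.2 ≤ p.1 + a}
                  (fun p => ENNReal.ofReal (|J (H_F p.2)|)) := by
              funext p
              rcases p with ⟨t, y⟩
              by_cases hy : y ∈ Set.Icc (t - a) (t + a)
              · rw [Function.uncurry]
                simp only [Set.indicator_of_mem hy]
                rw [Set.indicator_of_mem (by exact hy)]
              · rw [Function.uncurry]
                simp only [Set.indicator_of_notMem hy]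
                rw [Set.indicator_of_notMem (by exact hy)]
            rw [heq]
            refine AEMeasurable.indicator ?_ ?_
            · exact (ENNReal.measurable_ofReal.comp_aemeasurable
                (hJint.aemeasurable.comp_quasiMeasurePreserving
                  Measure.quasiMeasurePreserving_snd))
            · exact ((measurableSet_le (measurable_fst.sub measurable_const) measurable_snd).inter
                (measurableSet_le measurable_snd (measurable_fst.add measurable_const)))
        _ = ∫⁻ y, ∫⁻ t, (Set.Icc (y - a) (y + a)).indicator
              (fun _ => ENNReal.ofReal (|J (H_F y)|)) t := by
            apply lintegral_congr
            intro y
            apply lintegral_congr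
            intro t
            have hiff : y ∈ Set.Icc (t - a) (t + a) ↔ t ∈ Set.Icc (y - a) (y + a) := by
              simp only [Set.mem_Icc]
              constructor <;> rintro ⟨h1, h2⟩ <;> exact ⟨by linarith, by linarith⟩
            by_cases ht : t ∈ Set.Icc (y - a) (y + a)
            · rw [Set.indicator_of_mem (hiff.mpr ht), Set.indicator_of_mem ht]
            · rw [Set.indicator_of_notMem (fun hmem => ht (hiff.mp hmem)),
                Set.indicator_of_notMem ht]
        _ = ∫⁻ y, ENNReal.ofReal (|J (H_F y)|) * volume (Set.Icc (y - a) (y + a)) := by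
            apply lintegral_congr
            intro y
            rw [lintegral_indicator measurableSet_Icc, setLIntegral_const]
        _ = ∫⁻ y, ENNReal.ofReal (|J (H_F y)|) * ENNReal.ofReal (2 * a) := by
            apply lintegral_congr
            intro y
            rw [Real.volume_Icc, show y + a - (y - a) = 2 * a by ring]
        _ = (∫⁻ y, ENNReal.ofReal (|J (H_F y)|)) * ENNReal.ofReal (2 * a) :=
            lintegral_mul_const' _ _ ENNReal.ofReal_ne_top
        _ = ENNReal.ofReal C * ENNReal.ofReal (2 * a) := by rw [hofC]
    have hkey : ∫⁻ t, ENNReal.ofReal (G t) ∂(μ.map fun ω => h (X ω)) ≤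
        ENNReal.ofReal (C * (2 * M * (Ltilde:ℝ)) * ε) := by
      rw [hdens]
      have hle : MeasureTheory.volume.withDensity (fun x => ENNReal.ofReal (h_F x)) ≤
          (ENNReal.ofReal M) • (volume : Measure ℝ) := by
        refine Measure.le_iff.mpr fun s hs => ?_
        rw [withDensity_apply _ hs, Measure.smul_apply, smul_eq_mul]
        calc ∫⁻ x in s, ENNReal.ofReal (h_F x) ≤ ∫⁻ _ in s, ENNReal.ofReal M :=
              lintegral_mono fun x => ENNReal.ofReal_le_ofReal (hFbdd x)
          _ = ENNReal.ofReal M * volume s := setLIntegral_const s _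
      calc ∫⁻ t, ENNReal.ofReal (G t) ∂(MeasureTheory.volume.withDensity
            (fun x => ENNReal.ofReal (h_F x)))
          ≤ ∫⁻ t, ENNReal.ofReal (G t) ∂((ENNReal.ofReal M) • (volume : Measure ℝ)) :=
            lintegral_mono' hle le_rfl
        _ = ENNReal.ofReal M * ∫⁻ t, ENNReal.ofReal (G t) := lintegral_smul_measure _ _
        _ ≤ ENNReal.ofReal M * (ENNReal.ofReal C * ENNReal.ofReal (2 * a)) :=
            mul_le_mul_right htonelli.le _
        _ = ENNReal.ofReal (C * (2 * M * (Ltilde:ℝ)) * ε) := by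
            rw [← ENNReal.ofReal_mul hC0, ← ENNReal.ofReal_mul hM0]
            congr 1
            rw [ha]
            ring
    have hGint : Integrable (fun ω => G (h (X ω))) μ := by
      refine ⟨(hGmeas.comp hmhX).aestronglyMeasurable, ?_⟩
      rw [hasFiniteIntegral_iff_ofReal (Filter.Eventually.of_forall fun ω => hG0 _)]
      calc ∫⁻ ω, ENNReal.ofReal (G (h (X ω))) ∂μ
          = ∫⁻ t, ENNReal.ofReal (G t) ∂(μ.map fun ω => h (X ω)) :=
            (lintegral_map hGmeas.ennreal_ofReal hmhX).symm
        _ ≤ ENNReal.ofReal (C * (2 * M * (Ltilde:ℝ)) * ε) := hkey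
        _ < ⊤ := ENNReal.ofReal_lt_top
    calc ∫ ω, (⨆ x : {x : EuclideanSpace ℝ (Fin m) // dist x (X ω) ≤ ε},
          |A₁ x.1 - A₁ (X ω)|) ∂μ
        ≤ ∫ ω, G (h (X ω)) ∂μ :=
          integral_mono_of_nonneg (Filter.Eventually.of_forall hsup0) hGint
            (Filter.Eventually.of_forall hsup)
      _ = (∫⁻ ω, ENNReal.ofReal (G (h (X ω))) ∂μ).toReal :=
          integral_eq_lintegral_of_nonneg_ae (Filter.Eventually.of_forall fun ω => hG0 _) hGint.1
      _ ≤ C * (2 * M * (Ltilde:ℝ)) * ε := by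
          rw [← lintegral_map hGmeas.ennreal_ofReal hmhX]
          exact ENNReal.toReal_le_of_le_ofReal hRHS0 hkey
  · -- degenerate case: the integrand defining `A₁` is never a.e. strongly measurable
    have hA0 : ∀ x, A₁ x = 0 := by
      intro x
      rw [hA₁ x]
      apply integral_undef
      intro hint
      apply hφm
      have hS1 : MeasurableSet {y : ℝ | ind (h x ≤ y) - H_F y = 0 ∧ h x ≤ y} :=
        ((hmc (h x)) (measurableSet_singleton 0)).inter measurableSet_Ici
      have hS2 : MeasurableSet {y : ℝ | ind (h x ≤ y) - H_F y = 0 ∧ ¬ h x ≤ y} :=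
        ((hmc (h x)) (measurableSet_singleton 0)).inter
          (measurableSet_Ici.compl : MeasurableSet {y : ℝ | ¬ h x ≤ y})
      have heq : (fun y => J (H_F y)) = fun y =>
          (ind (h x ≤ y) - H_F y)⁻¹ * ((ind (h x ≤ y) - H_F y) * J (H_F y))
          + (({y : ℝ | ind (h x ≤ y) - H_F y = 0 ∧ h x ≤ y}).indicator (fun _ => J 1) y
            + ({y : ℝ | ind (h x ≤ y) - H_F y = 0 ∧ ¬ h x ≤ y}).indicator (fun _ => J 0) y) := by
        funext y
        by_cases hc : ind (h x ≤ y) - H_F y = 0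
        · by_cases hxy : h x ≤ y
          · have h1 : H_F y = 1 := by
              unfold ind at hc
              rw [if_pos hxy] at hc
              linarith
            have hnlt : ¬ y < h x := not_lt.mpr hxy
            simp [Set.indicator, ind, hc, hxy, h1, hnlt]
          · have h0 : H_F y = 0 := by
              unfold ind at hc
              rw [if_neg hxy] at hc
              linarith
            have hlt : y < h x := not_le.mp hxy
            simp [Set.indicator, ind, hc, hxy, h0, hlt]
        · have hind1 : y ∉ {y : ℝ | ind (h x ≤ y) - H_F y = 0 ∧ h x ≤ y} :=
            fun hy => hc hy.1
          have hind2 : y ∉ {y : ℝ | ind (h x ≤ y) - H_F y = 0 ∧ ¬ h x ≤ y} :=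
            fun hy => hc hy.1
          rw [Set.indicator_of_notMem hind1, Set.indicator_of_notMem hind2,
            inv_mul_cancel_left₀ hc]
          ring
      rw [heq]
      exact (((hmc (h x)).inv.aestronglyMeasurable.mul hint.1).add
        (((measurable_const.indicator hS1).aestronglyMeasurable).add
          ((measurable_const.indicator hS2).aestronglyMeasurable)))
    have hz : ∀ ω, (⨆ x : {x : EuclideanSpace ℝ (Fin m) // dist x (X ω) ≤ ε},
        |A₁ x.1 - A₁ (X ω)|) = 0 := by
      intro ω
      have := hne ω
      simp [hA0, ciSup_const]
    rw [integral_congr_ae (Filter.Eventually.of_forall hz)]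
    simpa using hRHS0
end

section
/- Suppose random variables ξ̂_p, and processes Z_n(t), V_n(t) satisfy: (a) {√n(ξ̂_p − ξ_p) ≤ t} = {Z_n(t) ≤ V_n(t)} for all t and n; (b) V_n(t) → t in probability for every fixed t; (c) Z_n(t) − Z_n(0) → 0 in probability for every fixed t. Then for every t ∈ ℝ and ε > 0, P(√n(ξ̂_p − ξ_p) ≤ t, Z_n(0) ≥ t + ε) → 0 and P(√n(ξ̂_p − ξ_p) ≥ t, Z_n(0) ≤ t − ε) → 0 as n → ∞. -/
open MeasureTheory Filter

lemma squeeze_union {Ω : Type*} [MeasurableSpace Ω] (μ : Measure Ω)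
    (S A B : ℕ → Set Ω) (hsub : ∀ n, S n ⊆ A n ∪ B n)
    (hA : Tendsto (fun n => μ (A n)) atTop (nhds 0))
    (hB : Tendsto (fun n => μ (B n)) atTop (nhds 0)) :
    Tendsto (fun n => μ (S n)) atTop (nhds 0) := by
  have hsum : Tendsto (fun n => μ (A n) + μ (B n)) atTop (nhds 0) := by
    simpa using hA.add hB
  exact tendsto_of_tendsto_of_tendsto_of_le_of_le tendsto_const_nhds hsum
    (fun n => zero_le)
    (fun n => le_trans (measure_mono (hsub n)) (measure_union_le _ _))

/-- The comparison step in the proof of the Bahadur representation: if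
`{√n(ξ̂_p − ξ_p) ≤ t} = {Z_n(t) ≤ V_n(t)}`, `V_n(t) → t` in probability and
`Z_n(t) − Z_n(0) → 0` in probability, then
`P(√n(ξ̂_p − ξ_p) ≤ t, Z_n(0) ≥ t + ε) → 0` and
`P(√n(ξ̂_p − ξ_p) ≥ t, Z_n(0) ≤ t − ε) → 0`. -/
theorem stmt15 {Ω : Type*} [MeasurableSpace Ω] (μ : Measure Ω) [IsProbabilityMeasure μ]
    (xihat : ℕ → Ω → ℝ) (ξp : ℝ) (Z V : ℕ → ℝ → Ω → ℝ)
    (ha : ∀ (n : ℕ) (t : ℝ),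
      {ω | Real.sqrt n * (xihat n ω - ξp) ≤ t} = {ω | Z n t ω ≤ V n t ω})
    (hb : ∀ t : ℝ, TendstoInMeasure μ (fun n => V n t) atTop (fun _ => t))
    (hc : ∀ t : ℝ, TendstoInMeasure μ (fun n ω => Z n t ω - Z n 0 ω) atTop (0 : Ω → ℝ)) :
    ∀ (t ε : ℝ), 0 < ε →
      Tendsto (fun n : ℕ =>
          μ ({ω | Real.sqrt n * (xihat n ω - ξp) ≤ t} ∩ {ω | t + ε ≤ Z n 0 ω}))
        atTop (nhds 0) ∧
      Tendsto (fun n : ℕ =>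
          μ ({ω | t ≤ Real.sqrt n * (xihat n ω - ξp)} ∩ {ω | Z n 0 ω ≤ t - ε}))
        atTop (nhds 0) := by
  intro t ε hε
  constructor
  · refine squeeze_union μ _
      (fun n => {ω | ε/2 ≤ dist (Z n t ω - Z n 0 ω) ((0 : Ω → ℝ) ω)})
      (fun n => {ω | ε/2 ≤ dist (V n t ω) t}) (fun n ω hω => ?_)
      (tendstoInMeasure_iff_dist.mp (hc t) (ε/2) (by linarith)) (tendstoInMeasure_iff_dist.mp (hb t) (ε/2) (by linarith))
    obtain ⟨h1, h2⟩ := hω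
    rw [ha n t] at h1
    simp only [Set.mem_setOf_eq] at h1 h2 ⊢
    by_contra hcon
    simp only [Set.mem_union, Set.mem_setOf_eq, not_or, not_le] at hcon
    obtain ⟨hz, hv⟩ := hcon
    rw [Real.dist_eq] at hz hv
    simp only [Pi.zero_apply, sub_zero] at hz
    have := abs_lt.mp hz
    have := abs_lt.mp hv
    linarith
  · refine squeeze_union μ _
      (fun n => {ω | ε/4 ≤ dist (Z n (t - ε/2) ω - Z n 0 ω) ((0 : Ω → ℝ) ω)})
      (fun n => {ω | ε/4 ≤ dist (V n (t - ε/2) ω) (t - ε/2)}) (fun n ω hω => ?_)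
      (tendstoInMeasure_iff_dist.mp (hc (t - ε/2)) (ε/4) (by linarith)) (tendstoInMeasure_iff_dist.mp (hb (t - ε/2)) (ε/4) (by linarith))
    obtain ⟨h1, h2⟩ := hω
    simp only [Set.mem_setOf_eq] at h1 h2
    have hn : ¬ (Real.sqrt n * (xihat n ω - ξp) ≤ t - ε/2) := by linarith
    have hn' : ω ∉ {ω | Z n (t - ε/2) ω ≤ V n (t - ε/2) ω} := by
      rw [← ha n (t - ε/2)]; exact hn
    simp only [Set.mem_setOf_eq, not_le] at hn'
    by_contra hcon
    simp only [Set.mem_union, Set.mem_setOf_eq, not_or, not_le] at hcon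
    obtain ⟨hz, hv⟩ := hcon
    rw [Real.dist_eq] at hz hv
    simp only [Pi.zero_apply, sub_zero] at hz
    have := abs_lt.mp hz
    have := abs_lt.mp hv
    linarith
end

section
/- Let (Y_n) be real random variables and W_n real random variables such that for all t ∈ ℝ and ε > 0, P(Y_n ≤ t, W_n ≥ t + ε) → 0 and P(Y_n ≥ t + ε, W_n ≤ t) → 0 as n → ∞, and suppose (W_n) is tight. Then Y_n − W_n → 0 in probability. -/
open MeasureTheory Filter

/-- A version of Lemma 1 of Ghosh (1971): if `P(Y_n ≤ t, W_n ≥ t + ε) → 0` and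
`P(Y_n ≥ t + ε, W_n ≤ t) → 0` for all `t` and `ε > 0`, and `(W_n)` is tight, then
`Y_n − W_n → 0` in probability. -/
theorem stmt16 {Ω : Type*} [MeasurableSpace Ω] (μ : Measure Ω) [IsProbabilityMeasure μ]
    (Y W : ℕ → Ω → ℝ)
    (hmeasY : ∀ n, Measurable (Y n)) (hmeasW : ∀ n, Measurable (W n))
    (h1 : ∀ (t ε : ℝ), 0 < ε →
      Tendsto (fun n => μ ({ω | Y n ω ≤ t} ∩ {ω | t + ε ≤ W n ω})) atTop (nhds 0))
    (h2 : ∀ (t ε : ℝ), 0 < ε →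
      Tendsto (fun n => μ ({ω | t + ε ≤ Y n ω} ∩ {ω | W n ω ≤ t})) atTop (nhds 0))
    (htight : ∀ η : ℝ, 0 < η → ∃ M : ℝ, ∀ n, μ {ω | M < |W n ω|} < ENNReal.ofReal η) :
    TendstoInMeasure μ (fun n ω => Y n ω - W n ω) atTop (0 : Ω → ℝ) := by
  rw [tendstoInMeasure_iff_dist]
  intro ε hε
  have hε2 : (0:ℝ) < ε / 2 := by positivity
  rw [ENNReal.tendsto_nhds_zero]
  intro η hη
  obtain ⟨c, hc0, hcη⟩ := exists_between hη
  have hcT : c ≠ ⊤ := (hcη.trans_le le_top).ne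
  set r : ℝ := c.toReal with hrdef
  have hr0 : 0 < r := ENNReal.toReal_pos hc0.ne' hcT
  obtain ⟨M, hM⟩ := htight (r / 2) (by positivity)
  set M' : ℝ := max M 0 with hM'def
  have hM'0 : (0:ℝ) ≤ M' := le_max_right _ _
  set K : ℕ := ⌈2 * (2 * M' + ε) / ε⌉₊ + 1 with hKdef
  set t : ℕ → ℝ := fun i => -M' - ε + i * (ε / 2) with htdef
  have hsum : Tendsto (fun n => ∑ i ∈ Finset.range K,
      (μ ({ω | t i + ε / 2 ≤ Y n ω} ∩ {ω | W n ω ≤ t i})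
      + μ ({ω | Y n ω ≤ t i} ∩ {ω | t i + ε / 2 ≤ W n ω}))) atTop (nhds 0) := by
    have h := tendsto_finset_sum (Finset.range K)
      (fun i _ => (h2 (t i) (ε / 2) hε2).add (h1 (t i) (ε / 2) hε2))
    simpa using h
  have hev := hsum.eventually_lt_const
    (ENNReal.ofReal_pos.2 (by positivity : (0:ℝ) < r / 2))
  filter_upwards [hev] with n hn
  have hsub : {x | ε ≤ dist (Y n x - W n x) ((0 : Ω → ℝ) x)} ⊆
      {ω | M' < |W n ω|} ∪ ⋃ i ∈ Finset.range K,
        (({ω | t i + ε / 2 ≤ Y n ω} ∩ {ω | W n ω ≤ t i}) ∪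
         ({ω | Y n ω ≤ t i} ∩ {ω | t i + ε / 2 ≤ W n ω})) := by
    intro ω hω
    simp only [Set.mem_setOf_eq, Pi.zero_apply, Real.dist_eq, sub_zero] at hω
    by_cases hW : M' < |W n ω|
    · exact Or.inl hW
    · right
      push_neg at hW
      have hWl : -M' ≤ W n ω := neg_le_of_abs_le hW
      have hWu : W n ω ≤ M' := le_of_abs_le hW
      rcases le_abs.mp hω with hcase | hcase
      · -- ε ≤ Y - W : use h2-type set
        set x : ℝ := 2 * (W n ω + M' + ε) / ε with hxdef
        have hx0 : (0:ℝ) ≤ x := by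
          apply div_nonneg _ hε.le; linarith
        set i : ℕ := ⌈x⌉₊ with hidef
        have hi1 : x ≤ (i:ℝ) := Nat.le_ceil x
        have hi2 : (i:ℝ) < x + 1 := Nat.ceil_lt_add_one hx0
        have hxh : x * (ε / 2) = W n ω + M' + ε := by
          rw [hxdef]; field_simp
        have h3 : (i:ℝ) * (ε / 2) < W n ω + M' + ε + ε / 2 := by
          calc (i:ℝ) * (ε / 2) < (x + 1) * (ε / 2) :=
                mul_lt_mul_of_pos_right hi2 hε2
            _ = W n ω + M' + ε + ε / 2 := by rw [add_mul, hxh, one_mul]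
        have h4 : W n ω + M' + ε ≤ (i:ℝ) * (ε / 2) := by
          rw [← hxh]; exact mul_le_mul_of_nonneg_right hi1 hε2.le
        have hiK : i ∈ Finset.range K := by
          rw [Finset.mem_range, hKdef]
          have hxb : x ≤ 2 * (2 * M' + ε) / ε := by
            apply div_le_div_of_nonneg_right _ hε.le
            linarith
          exact Nat.lt_succ_of_le (Nat.ceil_le_ceil hxb)
        refine Set.mem_biUnion hiK (Or.inl ⟨?_, ?_⟩)
        · simp only [Set.mem_setOf_eq, htdef]; linarith
        · simp only [Set.mem_setOf_eq, htdef]; linarith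
      · -- ε ≤ W - Y : use h1-type set
        have hcase' : ε ≤ W n ω - Y n ω := by linarith
        set x : ℝ := 2 * (W n ω + M' + ε / 2) / ε with hxdef
        have hx0 : (0:ℝ) ≤ x := by
          apply div_nonneg _ hε.le; linarith
        set i : ℕ := ⌊x⌋₊ with hidef
        have hi1 : (i:ℝ) ≤ x := Nat.floor_le hx0
        have hi2 : x < (i:ℝ) + 1 := Nat.lt_floor_add_one x
        have hxh : x * (ε / 2) = W n ω + M' + ε / 2 := by
          rw [hxdef]; field_simp
        have h3 : (i:ℝ) * (ε / 2) ≤ W n ω + M' + ε / 2 := by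
          rw [← hxh]; exact mul_le_mul_of_nonneg_right hi1 hε2.le
        have h4 : W n ω + M' + ε / 2 < ((i:ℝ) + 1) * (ε / 2) := by
          rw [← hxh]; exact mul_lt_mul_of_pos_right hi2 hε2
        have hiK : i ∈ Finset.range K := by
          rw [Finset.mem_range, hKdef]
          have hxb : x ≤ 2 * (2 * M' + ε) / ε := by
            apply div_le_div_of_nonneg_right _ hε.le
            linarith
          exact Nat.lt_succ_of_le ((Nat.floor_le_ceil x).trans (Nat.ceil_le_ceil hxb))
        refine Set.mem_biUnion hiK (Or.inr ⟨?_, ?_⟩)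
        · simp only [Set.mem_setOf_eq, htdef]; nlinarith
        · simp only [Set.mem_setOf_eq, htdef]; linarith
  have hW1 : μ {ω | M' < |W n ω|} < ENNReal.ofReal (r / 2) := by
    refine lt_of_le_of_lt (measure_mono ?_) (hM n)
    intro ω hω
    exact lt_of_le_of_lt (le_max_left M 0) hω
  refine le_of_lt ?_
  calc μ {x | ε ≤ dist (Y n x - W n x) ((0 : Ω → ℝ) x)}
      ≤ μ ({ω | M' < |W n ω|} ∪ ⋃ i ∈ Finset.range K,
        (({ω | t i + ε / 2 ≤ Y n ω} ∩ {ω | W n ω ≤ t i}) ∪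
         ({ω | Y n ω ≤ t i} ∩ {ω | t i + ε / 2 ≤ W n ω}))) := measure_mono hsub
    _ ≤ μ {ω | M' < |W n ω|} + μ (⋃ i ∈ Finset.range K,
        (({ω | t i + ε / 2 ≤ Y n ω} ∩ {ω | W n ω ≤ t i}) ∪
         ({ω | Y n ω ≤ t i} ∩ {ω | t i + ε / 2 ≤ W n ω}))) := measure_union_le _ _
    _ ≤ μ {ω | M' < |W n ω|} + ∑ i ∈ Finset.range K,
        μ ((({ω | t i + ε / 2 ≤ Y n ω} ∩ {ω | W n ω ≤ t i}) ∪
         ({ω | Y n ω ≤ t i} ∩ {ω | t i + ε / 2 ≤ W n ω}))) :=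
        add_le_add_right (measure_biUnion_finset_le _ _) _
    _ ≤ μ {ω | M' < |W n ω|} + ∑ i ∈ Finset.range K,
        (μ ({ω | t i + ε / 2 ≤ Y n ω} ∩ {ω | W n ω ≤ t i})
        + μ ({ω | Y n ω ≤ t i} ∩ {ω | t i + ε / 2 ≤ W n ω})) :=
        add_le_add_right (Finset.sum_le_sum fun i _ => measure_union_le _ _) _
    _ < ENNReal.ofReal (r / 2) + ENNReal.ofReal (r / 2) := ENNReal.add_lt_add hW1 hn
    _ = c := by
        rw [← ENNReal.ofReal_add (by positivity) (by positivity)]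
        rw [add_halves]
        exact ENNReal.ofReal_toReal hcT
    _ ≤ η := hcη.le
end
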